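/- arXiv:1904.07115 — 4 statements merged into one kernel-verified Lean document; each statement's English description precedes it below -/
import Mathlib

section
/- Let q ∈ [1,2] and let (M_n)_{n≥1} be a complex-valued martingale (with respect to some filtration) such that E[|M_n|^q] < ∞ for all n. Then for every n ≥ 1, E[|M_{n+1}|^q] ≤ E[|M_n|^q] + 2^q · E[|M_{n+1} − M_n|^q]. -/
set_option maxHeartbeats 1000000

open MeasureTheory ProbabilityTheory Filter

-- scalar lemma: 1 + q * 2^(1-q) ≤ 2^q for 1 ≤ q ≤ 2
lemma vbe_scalar {q : ℝ} (hq1 : 1 ≤ q) (hq2 : q ≤ 2) :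
    1 + q * (2:ℝ) ^ (1 - q) ≤ (2:ℝ) ^ q := by
  set u : ℝ := (2:ℝ) ^ (q - 1) with hu
  have hu0 : 0 < u := Real.rpow_pos_of_pos two_pos _
  have hu1 : 1 ≤ u := by
    have := Real.rpow_le_rpow_of_exponent_le (one_le_two) (by linarith : (0:ℝ) ≤ q - 1)
    simpa [Real.rpow_zero] using this
  have hlog : Real.log u = (q - 1) * Real.log 2 := Real.log_rpow two_pos _
  have h1 : Real.log u ≤ u - 1 := Real.log_le_sub_one_of_pos hu0
  have hL : (0.6931471803 : ℝ) < Real.log 2 := Real.log_two_gt_d9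
  have hq3 : q - 1 ≤ 3 * (u - 1) := by nlinarith [hlog ▸ h1]
  have h2q : (2:ℝ) ^ q = 2 * u := by
    have h := Real.rpow_add two_pos 1 (q - 1)
    rw [show (1:ℝ) + (q - 1) = q by ring, Real.rpow_one] at h
    rw [hu, h]
  have h2q' : (2:ℝ) ^ (1 - q) = u⁻¹ := by
    rw [hu, ← Real.rpow_neg (by norm_num : (0:ℝ) ≤ 2)]
    ring_nf
  rw [h2q, h2q']
  have huv : u * u⁻¹ = 1 := mul_inv_cancel₀ hu0.ne'
  nlinarith [mul_nonneg (by linarith : (0:ℝ) ≤ 3 * u - 2 - q) (inv_nonneg.2 hu0.le),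
    mul_nonneg (sq_nonneg (u - 1)) (inv_nonneg.2 hu0.le), sq_nonneg (u-1), huv]

-- tangent line inequality for concave rpow
lemma rpow_tangent {c t r : ℝ} (hc : 0 < c) (ht : 0 ≤ t) (hr0 : 0 < r) (hr1 : r ≤ 1) :
    t ^ r ≤ c ^ r + r * c ^ (r - 1) * (t - c) := by
  have hs : -1 ≤ t / c - 1 := by
    have : 0 ≤ t / c := div_nonneg ht hc.le
    linarith
  have hb := rpow_one_add_le_one_add_mul_self hs hr0.le hr1
  rw [show 1 + (t / c - 1) = t / c by ring] at hb
  have hdiv : (t / c) ^ r = t ^ r / c ^ r := Real.div_rpow ht hc.le r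
  rw [hdiv] at hb
  have hcr : 0 < c ^ r := Real.rpow_pos_of_pos hc _
  have hkey : t ^ r ≤ c ^ r * (1 + r * (t / c - 1)) := by
    calc t ^ r = (t ^ r / c ^ r) * c ^ r := by field_simp
    _ ≤ (1 + r * (t / c - 1)) * c ^ r := by
        exact mul_le_mul_of_nonneg_right hb hcr.le
    _ = c ^ r * (1 + r * (t / c - 1)) := by ring
  refine hkey.trans (le_of_eq ?_)
  have hc1 : c ^ (r - 1) = c ^ r / c := by
    rw [Real.rpow_sub hc, Real.rpow_one]
  rw [hc1]
  field_simp

-- (max-type) bound: (x+y)^q ≤ 2^q (x^q + y^q)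
lemma rpow_add_le_two_rpow {x y q : ℝ} (hx : 0 ≤ x) (hy : 0 ≤ y) (hq : 0 ≤ q) :
    (x + y) ^ q ≤ 2 ^ q * (x ^ q + y ^ q) := by
  have h1 : x + y ≤ 2 * max x y := by
    rcases le_total x y with h | h <;> simp [max_eq_right, max_eq_left, h] <;> linarith
  have h2 : (x + y) ^ q ≤ (2 * max x y) ^ q :=
    Real.rpow_le_rpow (by linarith) h1 hq
  have h3 : (2 * max x y) ^ q = 2 ^ q * (max x y) ^ q :=
    Real.mul_rpow (by norm_num) (le_max_iff.2 (Or.inl hx))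
  have h4 : (max x y) ^ q ≤ x ^ q + y ^ q := by
    rcases le_total x y with h | h
    · rw [max_eq_right h]
      exact le_add_of_nonneg_left (Real.rpow_nonneg hx q)
    · rw [max_eq_left h]
      exact le_add_of_nonneg_right (Real.rpow_nonneg hy q)
  calc (x + y) ^ q ≤ 2 ^ q * (max x y) ^ q := h3 ▸ h2
  _ ≤ 2 ^ q * (x ^ q + y ^ q) := by
      have : (0:ℝ) ≤ 2 ^ q := Real.rpow_nonneg (by norm_num) q
      exact mul_le_mul_of_nonneg_left h4 this

lemma sq_rpow_half_mul (c p : ℝ) (hc : 0 ≤ c) : (c ^ 2) ^ p = c ^ (2 * p) := by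
  rw [← Real.rpow_natCast c 2, ← Real.rpow_mul hc]
  norm_num

lemma vbe_pointwise {q : ℝ} (hq1 : 1 ≤ q) (hq2 : q ≤ 2) (x y : ℂ) :
    ‖x + y‖ ^ q ≤ ‖x‖ ^ q + q * ‖x‖ ^ (q - 2) * (x * (starRingEnd ℂ) y).re
      + 2 ^ q * ‖y‖ ^ q := by
  have hq0 : (0:ℝ) < q := by linarith
  have h2q1 : (1:ℝ) ≤ 2 ^ q := by
    have := Real.rpow_le_rpow_of_exponent_le (one_le_two) hq0.le
    simpa [Real.rpow_zero] using this
  have h2q2 : (2:ℝ) ≤ 2 ^ q := by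
    have := Real.rpow_le_rpow_of_exponent_le (one_le_two) hq1
    simpa [Real.rpow_one] using this
  by_cases hx0 : x = 0
  · subst hx0
    simp only [zero_add, map_zero, zero_mul, Complex.zero_re, mul_zero, norm_zero,
      Real.zero_rpow hq0.ne', zero_add]
    exact le_mul_of_one_le_left (Real.rpow_nonneg (norm_nonneg _) _) h2q1
  set a := ‖x‖ with ha_def
  set b := ‖y‖ with hb_def
  set s := (x * (starRingEnd ℂ) y).re with hs_def
  have ha : 0 < a := norm_pos_iff.2 hx0
  have hb : 0 ≤ b := norm_nonneg _
  have habs : |s| ≤ a * b := by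
    calc |s| ≤ ‖x * (starRingEnd ℂ) y‖ := Complex.abs_re_le_norm _
    _ = a * b := by
        rw [norm_mul, Complex.norm_conj, ha_def, hb_def]
  have hT : a ^ 2 + 2 * s + b ^ 2 = ‖x + y‖ ^ 2 := by
    have h1 := Complex.normSq_add x y
    have h2 : ∀ z : ℂ, Complex.normSq z = ‖z‖ ^ 2 := fun z => by
      rw [Complex.normSq_eq_norm_sq]
    rw [h2, h2, h2] at h1
    rw [h1]; ring
  have hT0 : 0 ≤ a ^ 2 + 2 * s + b ^ 2 := by rw [hT]; positivity
  have hnorm : ‖x + y‖ ^ q = (a ^ 2 + 2 * s + b ^ 2) ^ (q / 2) := by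
    rw [hT, sq_rpow_half_mul _ _ (norm_nonneg _)]
    congr 1
    ring
  have hhalf0 : (0:ℝ) < q / 2 := by linarith
  have hhalf1 : q / 2 ≤ 1 := by linarith
  have hbq0 : (0:ℝ) ≤ b ^ q := Real.rpow_nonneg hb q
  rcases le_or_gt b (2 * a) with hcase | hcase
  · -- b ≤ 2a : tangent at a^2
    have htan := rpow_tangent (c := a ^ 2) (t := a ^ 2 + 2 * s + b ^ 2)
      (by positivity) hT0 hhalf0 hhalf1
    rw [sq_rpow_half_mul _ _ ha.le, sq_rpow_half_mul _ _ ha.le] at htan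
    rw [show 2 * (q / 2) = q by ring, show 2 * (q / 2 - 1) = q - 2 by ring] at htan
    have hmain : (q / 2) * a ^ (q - 2) * b ^ 2 ≤ 2 ^ q * b ^ q := by
      rcases eq_or_lt_of_le hb with hb0 | hb0
      · rw [← hb0]; simp [Real.zero_rpow hq0.ne']
      · have h1 : a ^ (q - 2) ≤ (b / 2) ^ (q - 2) :=
          Real.rpow_le_rpow_of_nonpos (by linarith) (by linarith) (by linarith)
        have hsplit : (b / 2) ^ (q - 2) = b ^ (q - 2) * 2 ^ (2 - q) := by
          rw [Real.div_rpow hb (by norm_num), div_eq_mul_inv,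
            ← Real.rpow_neg (by norm_num : (0:ℝ) ≤ 2), show -(q - 2) = 2 - q by ring]
        have e1 : (b:ℝ) ^ (2:ℕ) = b ^ ((2:ℕ):ℝ) := (Real.rpow_natCast b 2).symm
        have e2 : b ^ (q - 2) * b ^ ((2:ℕ):ℝ) = b ^ q := by
          rw [← Real.rpow_add hb0]; norm_num
        have h2 : (b / 2) ^ (q - 2) * b ^ 2 = 2 ^ (2 - q) * b ^ q := by
          calc (b / 2) ^ (q - 2) * b ^ 2 = b ^ (q - 2) * 2 ^ (2 - q) * b ^ 2 := by
                rw [hsplit]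
          _ = b ^ (q - 2) * b ^ ((2:ℕ):ℝ) * 2 ^ (2 - q) := by rw [e1]; ring
          _ = 2 ^ (2 - q) * b ^ q := by rw [e2]; ring
        have h3 : (q / 2) * a ^ (q - 2) * b ^ 2 ≤ (q / 2) * (2 ^ (2 - q) * b ^ q) := by
          rw [mul_assoc]
          refine mul_le_mul_of_nonneg_left ?_ (by linarith)
          rw [← h2]
          exact mul_le_mul_of_nonneg_right h1 (by positivity)
        refine h3.trans ?_
        have h4 : (2:ℝ) ^ (2 - q) = 2 * 2 ^ (1 - q) := by
          have := Real.rpow_add (show (0:ℝ) < 2 by norm_num) 1 (1 - q)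
          rw [show (1:ℝ) + (1 - q) = 2 - q by ring, Real.rpow_one] at this
          rw [this]
        have h5 : (2:ℝ) ^ (1 - q) ≤ 1 :=
          Real.rpow_le_one_of_one_le_of_nonpos one_le_two (by linarith)
        have h6 : (0:ℝ) ≤ 2 ^ (1 - q) := Real.rpow_nonneg (by norm_num) _
        have : (q / 2) * (2 ^ (2 - q)) ≤ 2 := by
          rw [h4]; nlinarith
        calc (q / 2) * (2 ^ (2 - q) * b ^ q) = ((q / 2) * 2 ^ (2 - q)) * b ^ q := by ring
        _ ≤ 2 * b ^ q := mul_le_mul_of_nonneg_right this hbq0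
        _ ≤ 2 ^ q * b ^ q := mul_le_mul_of_nonneg_right h2q2 hbq0
    rw [hnorm]
    calc (a ^ 2 + 2 * s + b ^ 2) ^ (q / 2)
        ≤ a ^ q + q / 2 * a ^ (q - 2) * (a ^ 2 + 2 * s + b ^ 2 - a ^ 2) := htan
    _ = a ^ q + q * a ^ (q - 2) * s + (q / 2) * a ^ (q - 2) * b ^ 2 := by ring
    _ ≤ a ^ q + q * a ^ (q - 2) * s + 2 ^ q * b ^ q := by linarith
  · -- 2a < b : tangent at (b-a)^2
    have hba : 0 < b - a := by linarith
    have haba : a ≤ b - a := by linarith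
    have htan := rpow_tangent (c := (b - a) ^ 2) (t := a ^ 2 + 2 * s + b ^ 2)
      (by positivity) hT0 hhalf0 hhalf1
    rw [sq_rpow_half_mul _ _ hba.le, sq_rpow_half_mul _ _ hba.le] at htan
    rw [show 2 * (q / 2) = q by ring, show 2 * (q / 2 - 1) = q - 2 by ring] at htan
    have hdiff : a ^ 2 + 2 * s + b ^ 2 - (b - a) ^ 2 = 2 * (s + a * b) := by ring
    rw [hdiff] at htan
    have hsab : 0 ≤ s + a * b := by
      have := neg_abs_le s; nlinarith [habs]
    have hanti : (b - a) ^ (q - 2) ≤ a ^ (q - 2) :=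
      Real.rpow_le_rpow_of_nonpos ha haba (by linarith)
    have hstep : q / 2 * (b - a) ^ (q - 2) * (2 * (s + a * b))
        ≤ q * a ^ (q - 2) * s + q * (a ^ (q - 2) * a) * b := by
      have h1 : q / 2 * (b - a) ^ (q - 2) * (2 * (s + a * b))
          = q * ((b - a) ^ (q - 2) * (s + a * b)) := by ring
      have h2 : (b - a) ^ (q - 2) * (s + a * b) ≤ a ^ (q - 2) * (s + a * b) :=
        mul_le_mul_of_nonneg_right hanti hsab
      rw [h1]
      calc q * ((b - a) ^ (q - 2) * (s + a * b))
          ≤ q * (a ^ (q - 2) * (s + a * b)) := mul_le_mul_of_nonneg_left h2 hq0.le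
      _ = q * a ^ (q - 2) * s + q * (a ^ (q - 2) * a) * b := by ring
    have haa : a ^ (q - 2) * a = a ^ (q - 1) := by
      have := Real.rpow_add ha (q - 2) 1
      rw [show q - 2 + 1 = q - 1 by ring, Real.rpow_one] at this
      rw [this]
    have hfin : (b - a) ^ q + q * a ^ (q - 1) * b ≤ a ^ q + 2 ^ q * b ^ q := by
      have h1 : (b - a) ^ q ≤ b ^ q := Real.rpow_le_rpow hba.le (by linarith) hq0.le
      have h2 : a ^ (q - 1) ≤ (b / 2) ^ (q - 1) :=
        Real.rpow_le_rpow ha.le (by linarith) (by linarith)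
      have hb0 : 0 < b := by linarith
      have h3 : (b / 2) ^ (q - 1) * b = 2 ^ (1 - q) * b ^ q := by
        rw [Real.div_rpow hb (by norm_num), div_eq_mul_inv, ← Real.rpow_neg (by norm_num)]
        have := Real.rpow_add hb0 (q - 1) 1
        rw [show q - 1 + 1 = q by ring, Real.rpow_one] at this
        rw [mul_assoc, mul_comm ((2:ℝ) ^ (-(q-1))) b, ← mul_assoc, ← this]
        rw [show -(q - 1) = 1 - q by ring]
        ring
      have h4 : q * a ^ (q - 1) * b ≤ q * (2 ^ (1 - q) * b ^ q) := by
        rw [← h3, mul_assoc]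
        refine mul_le_mul_of_nonneg_left ?_ hq0.le
        exact mul_le_mul_of_nonneg_right h2 hb0.le
      have h5 : b ^ q + q * (2 ^ (1 - q) * b ^ q) = (1 + q * 2 ^ (1 - q)) * b ^ q := by ring
      have h6 : (1 + q * 2 ^ (1 - q)) * b ^ q ≤ 2 ^ q * b ^ q :=
        mul_le_mul_of_nonneg_right (vbe_scalar hq1 hq2) hbq0
      have haq : 0 ≤ a ^ q := Real.rpow_nonneg ha.le q
      nlinarith
    rw [hnorm]
    calc (a ^ 2 + 2 * s + b ^ 2) ^ (q / 2)
        ≤ (b - a) ^ q + q / 2 * (b - a) ^ (q - 2) * (2 * (s + a * b)) := htan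
    _ ≤ (b - a) ^ q + (q * a ^ (q - 2) * s + q * (a ^ (q - 2) * a) * b) := by linarith
    _ = (b - a) ^ q + q * a ^ (q - 1) * b + q * a ^ (q - 2) * s := by rw [haa]; ring
    _ ≤ a ^ q + 2 ^ q * b ^ q + q * a ^ (q - 2) * s := by linarith
    _ = a ^ q + q * a ^ (q - 2) * s + 2 ^ q * b ^ q := by ring

lemma measurable_norm_rpow {α : Type*} {m : MeasurableSpace α} {f : α → ℂ}
    (hf : Measurable[m] f) (p : ℝ) : Measurable[m] fun ω => ‖f ω‖ ^ p := by
  have h : (fun ω => ‖f ω‖ ^ p) = fun ω =>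
      if f ω = 0 then (0:ℝ) ^ p else Real.exp (Real.log ‖f ω‖ * p) := by
    funext ω; by_cases h : f ω = 0
    · simp [h]
    · rw [if_neg h, Real.rpow_def_of_pos (norm_pos_iff.2 h)]
  rw [h]
  refine Measurable.ite ?_ measurable_const
    (Real.measurable_exp.comp ((Real.measurable_log.comp hf.norm).mul_const p))
  exact hf (measurableSet_singleton 0)

lemma rpow_sub_one_mul {a p : ℝ} (ha : 0 ≤ a) (hp : p ≠ 0) : a ^ (p - 1) * a = a ^ p := by
  rcases eq_or_lt_of_le ha with h | h
  · rw [← h, Real.zero_rpow hp, mul_zero]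
  · have := Real.rpow_add h (p - 1) 1
    rw [show p - 1 + 1 = p by ring, Real.rpow_one] at this
    rw [this]

lemma young_aux {q a b : ℝ} (hq : 1 ≤ q) (ha : 0 ≤ a) (hb : 0 ≤ b) :
    a ^ (q - 2) * a * b ≤ a ^ q + b ^ q := by
  have hq0 : q ≠ 0 := by intro h; rw [h] at hq; norm_num at hq
  have h1 : a ^ (q - 2) * a ≤ a ^ (q - 1) := by
    rcases eq_or_lt_of_le ha with h | h
    · rw [← h, mul_zero]
      exact Real.rpow_nonneg le_rfl _
    · have := Real.rpow_add h (q - 2) 1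
      rw [show q - 2 + 1 = q - 1 by ring, Real.rpow_one] at this
      rw [this]
  have h2 : a ^ (q - 1) * b ≤ a ^ q + b ^ q := by
    rcases le_total b a with h | h
    · have hmul : a ^ (q - 1) * b ≤ a ^ (q - 1) * a :=
        mul_le_mul_of_nonneg_left h (Real.rpow_nonneg ha _)
      rw [rpow_sub_one_mul ha hq0] at hmul
      exact hmul.trans (le_add_of_nonneg_right (Real.rpow_nonneg hb _))
    · have hmul : a ^ (q - 1) * b ≤ b ^ (q - 1) * b :=
        mul_le_mul_of_nonneg_right (Real.rpow_le_rpow ha h (by linarith)) hb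
      rw [rpow_sub_one_mul hb hq0] at hmul
      exact hmul.trans (le_add_of_nonneg_left (Real.rpow_nonneg ha _))
  calc a ^ (q - 2) * a * b ≤ a ^ (q - 1) * b := mul_le_mul_of_nonneg_right h1 hb
  _ ≤ a ^ q + b ^ q := h2

lemma vbe_prod_bound {q : ℝ} (hq : 1 ≤ q) (x y : ℂ) {u v : ℝ}
    (hu : |u| ≤ ‖x‖) (hv : |v| ≤ ‖y‖) :
    |q * ‖x‖ ^ (q - 2) * u * v| ≤ q * (‖x‖ ^ q + ‖y‖ ^ q) := by
  have hq0 : (0:ℝ) ≤ q := by linarith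
  have hr : (0:ℝ) ≤ ‖x‖ ^ (q - 2) := Real.rpow_nonneg (norm_nonneg _) _
  have habs : |q * ‖x‖ ^ (q - 2) * u * v| = q * ‖x‖ ^ (q - 2) * |u| * |v| := by
    rw [abs_mul, abs_mul, abs_mul, abs_of_nonneg hq0, abs_of_nonneg hr]
  rw [habs]
  have h1 : q * ‖x‖ ^ (q - 2) * |u| * |v| ≤ q * ‖x‖ ^ (q - 2) * ‖x‖ * ‖y‖ := by
    have e1 : q * ‖x‖ ^ (q - 2) * |u| ≤ q * ‖x‖ ^ (q - 2) * ‖x‖ :=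
      mul_le_mul_of_nonneg_left hu (by positivity)
    calc q * ‖x‖ ^ (q - 2) * |u| * |v| ≤ q * ‖x‖ ^ (q - 2) * ‖x‖ * |v| :=
          mul_le_mul_of_nonneg_right e1 (abs_nonneg _)
    _ ≤ q * ‖x‖ ^ (q - 2) * ‖x‖ * ‖y‖ :=
          mul_le_mul_of_nonneg_left hv (by positivity)
  refine h1.trans ?_
  have h2 : ‖x‖ ^ (q - 2) * ‖x‖ * ‖y‖ ≤ ‖x‖ ^ q + ‖y‖ ^ q :=
    young_aux hq (norm_nonneg x) (norm_nonneg y)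
  calc q * ‖x‖ ^ (q - 2) * ‖x‖ * ‖y‖ = q * (‖x‖ ^ (q - 2) * ‖x‖ * ‖y‖) := by ring
  _ ≤ q * (‖x‖ ^ q + ‖y‖ ^ q) := mul_le_mul_of_nonneg_left h2 hq0

lemma condexp_zero_of_setIntegral_zero {Ω : Type*} {m m0 : MeasurableSpace Ω}
    {P : Measure Ω} [IsFiniteMeasure P] (hm : m ≤ m0) {g : Ω → ℝ}
    (hg : Integrable g P) (h : ∀ s, MeasurableSet[m] s → ∫ ω in s, g ω ∂P = 0) :
    P[g|m] =ᵐ[P] 0 := by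
  have := ae_eq_condExp_of_forall_setIntegral_eq hm hg
    (fun s _ _ => (integrable_zero _ _ _).integrableOn)
    (fun s hs _ => by
      rw [h s hs]
      simp)
    stronglyMeasurable_zero.aestronglyMeasurable
  exact this.symm

lemma integral_mul_condexp_zero {Ω : Type*} {m m0 : MeasurableSpace Ω}
    {P : Measure Ω} [IsFiniteMeasure P] (hm : m ≤ m0) {f g : Ω → ℝ}
    (hf : StronglyMeasurable[m] f) (hfg : Integrable (f * g) P)
    (hg : Integrable g P) (hcond : P[g|m] =ᵐ[P] 0) :
    ∫ ω, f ω * g ω ∂P = 0 := by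
  have hpull : P[f * g|m] =ᵐ[P] f * P[g|m] :=
    condExp_mul_of_stronglyMeasurable_left hf hfg hg
  have hzero : P[f * g|m] =ᵐ[P] 0 := by
    refine hpull.trans ?_
    filter_upwards [hcond] with ω hω
    simp [Pi.mul_apply, hω]
  have h1 : ∫ ω, f ω * g ω ∂P = ∫ ω, (P[f * g|m]) ω ∂P :=
    (integral_condExp hm (f := f * g)).symm
  rw [h1, integral_congr_ae hzero]
  simp

theorem martingale_qth_moment_increment_bound
    {Ω : Type*} {m0 : MeasurableSpace Ω} {P : Measure Ω} [IsProbabilityMeasure P]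
    (𝒢 : Filtration ℕ m0) (M : ℕ → Ω → ℂ) (hM : Martingale M 𝒢 P)
    (q : ℝ) (hq1 : 1 ≤ q) (hq2 : q ≤ 2)
    (hint : ∀ n, Integrable (fun ω => ‖M n ω‖ ^ q) P) (n : ℕ) :
    (∫ ω, ‖M (n + 1) ω‖ ^ q ∂P) ≤
      (∫ ω, ‖M n ω‖ ^ q ∂P) + 2 ^ q * ∫ ω, ‖M (n + 1) ω - M n ω‖ ^ q ∂P := by
  have hq0 : (0:ℝ) < q := by linarith
  set D : Ω → ℂ := fun ω => M (n + 1) ω - M n ω with hD_def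
  -- measurability
  have hMn_sm : StronglyMeasurable[𝒢 n] (M n) := hM.stronglyMeasurable n
  have hMn_m : Measurable[𝒢 n] (M n) := hMn_sm.measurable
  have hMn_m0 : Measurable (M n) := (hMn_sm.mono (𝒢.le n)).measurable
  have hMn1_m0 : Measurable (M (n + 1)) :=
    ((hM.stronglyMeasurable (n + 1)).mono (𝒢.le (n + 1))).measurable
  have hD_m : Measurable D := hMn1_m0.sub hMn_m0
  -- integrability of increments
  have hD_int : Integrable D P := (hM.integrable (n + 1)).sub (hM.integrable n)
  have hDq_int : Integrable (fun ω => ‖D ω‖ ^ q) P := by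
    refine Integrable.mono' (((hint (n + 1)).add (hint n)).const_mul (2 ^ q))
      ((measurable_norm_rpow hD_m q).aestronglyMeasurable) ?_
    filter_upwards with ω
    rw [Real.norm_of_nonneg (Real.rpow_nonneg (norm_nonneg _) _)]
    have h1 : ‖D ω‖ ≤ ‖M (n + 1) ω‖ + ‖M n ω‖ := norm_sub_le _ _
    have h2 : ‖D ω‖ ^ q ≤ (‖M (n + 1) ω‖ + ‖M n ω‖) ^ q :=
      Real.rpow_le_rpow (norm_nonneg _) h1 hq0.le
    exact h2.trans (rpow_add_le_two_rpow (norm_nonneg _) (norm_nonneg _) hq0.le)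
  -- the cross term
  set f1 : Ω → ℝ := fun ω => q * ‖M n ω‖ ^ (q - 2) * (M n ω).re with hf1_def
  set f2 : Ω → ℝ := fun ω => q * ‖M n ω‖ ^ (q - 2) * (M n ω).im with hf2_def
  have hf1_sm : StronglyMeasurable[𝒢 n] f1 :=
    (((measurable_norm_rpow hMn_m (q - 2)).const_mul q).mul
      (Complex.measurable_re.comp hMn_m)).stronglyMeasurable
  have hf2_sm : StronglyMeasurable[𝒢 n] f2 :=
    (((measurable_norm_rpow hMn_m (q - 2)).const_mul q).mul
      (Complex.measurable_im.comp hMn_m)).stronglyMeasurable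
  have hDre_m : Measurable fun ω => (D ω).re := Complex.measurable_re.comp hD_m
  have hDim_m : Measurable fun ω => (D ω).im := Complex.measurable_im.comp hD_m
  have hDre_int : Integrable (fun ω => (D ω).re) P := by
    simpa [RCLike.re_to_complex] using hD_int.re
  have hDim_int : Integrable (fun ω => (D ω).im) P := by
    simpa [RCLike.im_to_complex] using hD_int.im
  have hprod_int : ∀ (g : Ω → ℝ), Measurable g → (∀ ω, |g ω| ≤ ‖D ω‖) →
      ∀ (u : Ω → ℝ), Measurable u → (∀ ω, |u ω| ≤ ‖M n ω‖) →
      Integrable ((fun ω => q * ‖M n ω‖ ^ (q - 2) * u ω) * g) P := by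
    intro g hg hgD u hu huM
    refine Integrable.mono' (((hint n).add hDq_int).const_mul q)
      ((((measurable_norm_rpow hMn_m0 (q - 2)).const_mul q).mul hu).mul
        hg).aestronglyMeasurable ?_
    filter_upwards with ω
    have h := vbe_prod_bound hq1 (M n ω) (D ω) (huM ω) (hgD ω)
    rw [Pi.mul_apply, Real.norm_eq_abs]
    exact h
  have hf1D_int : Integrable (f1 * fun ω => (D ω).re) P :=
    hprod_int _ hDre_m (fun ω => Complex.abs_re_le_norm (D ω))
      _ (Complex.measurable_re.comp hMn_m0) (fun ω => Complex.abs_re_le_norm (M n ω))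
  have hf2D_int : Integrable (f2 * fun ω => (D ω).im) P :=
    hprod_int _ hDim_m (fun ω => Complex.abs_im_le_norm (D ω))
      _ (Complex.measurable_im.comp hMn_m0) (fun ω => Complex.abs_im_le_norm (M n ω))
  -- conditional expectation of the increment parts is zero
  have hsetD : ∀ s, MeasurableSet[𝒢 n] s → ∫ ω in s, D ω ∂P = 0 := by
    intro s hs
    have h1 : ∫ ω in s, M n ω ∂P = ∫ ω in s, M (n + 1) ω ∂P :=
      hM.setIntegral_eq (Nat.le_succ n) hs
    rw [hD_def]
    rw [integral_sub ((hM.integrable (n + 1)).integrableOn)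
      ((hM.integrable n).integrableOn), ← h1, sub_self]
  have hcondre : P[(fun ω => (D ω).re)|𝒢 n] =ᵐ[P] 0 := by
    refine condexp_zero_of_setIntegral_zero (𝒢.le n) hDre_int ?_
    intro s hs
    have := integral_re (μ := P.restrict s) (f := D) hD_int.integrableOn
    rw [hsetD s hs] at this
    simpa [RCLike.re_to_complex] using this
  have hcondim : P[(fun ω => (D ω).im)|𝒢 n] =ᵐ[P] 0 := by
    refine condexp_zero_of_setIntegral_zero (𝒢.le n) hDim_int ?_
    intro s hs
    have := integral_im (μ := P.restrict s) (f := D) hD_int.integrableOn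
    rw [hsetD s hs] at this
    simpa [RCLike.im_to_complex] using this
  have hzero1 : ∫ ω, f1 ω * (D ω).re ∂P = 0 :=
    integral_mul_condexp_zero (𝒢.le n) hf1_sm hf1D_int hDre_int hcondre
  have hzero2 : ∫ ω, f2 ω * (D ω).im ∂P = 0 :=
    integral_mul_condexp_zero (𝒢.le n) hf2_sm hf2D_int hDim_int hcondim
  -- the full cross term G
  set G : Ω → ℝ := fun ω => q * ‖M n ω‖ ^ (q - 2) * (M n ω * (starRingEnd ℂ) (D ω)).re
    with hG_def
  have hG_eq : ∀ ω, G ω = f1 ω * (D ω).re + f2 ω * (D ω).im := by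
    intro ω
    simp only [hG_def, hf1_def, hf2_def, Complex.mul_re, Complex.conj_re,
      Complex.conj_im]
    ring
  have i3 : Integrable (fun ω => f1 ω * (D ω).re) P := hf1D_int
  have i4 : Integrable (fun ω => f2 ω * (D ω).im) P := hf2D_int
  have hG_int : Integrable G P :=
    (i3.add i4).congr (Filter.Eventually.of_forall fun ω => (hG_eq ω).symm)
  have hG_zero : ∫ ω, G ω ∂P = 0 := by
    rw [integral_congr_ae (Filter.Eventually.of_forall hG_eq), integral_add i3 i4,
      hzero1, hzero2, add_zero]
  -- pointwise inequality and conclusion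
  have hpt : ∀ ω, ‖M (n + 1) ω‖ ^ q ≤ ‖M n ω‖ ^ q + G ω + 2 ^ q * ‖D ω‖ ^ q := by
    intro ω
    have h := vbe_pointwise hq1 hq2 (M n ω) (D ω)
    rw [show M n ω + D ω = M (n + 1) ω by rw [hD_def]; ring] at h
    exact h
  have hrhs_int : Integrable
      (fun ω => ‖M n ω‖ ^ q + G ω + 2 ^ q * ‖D ω‖ ^ q) P :=
    ((hint n).add hG_int).add (hDq_int.const_mul _)
  calc ∫ ω, ‖M (n + 1) ω‖ ^ q ∂P
      ≤ ∫ ω, (‖M n ω‖ ^ q + G ω + 2 ^ q * ‖D ω‖ ^ q) ∂P :=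
        integral_mono (hint (n + 1)) hrhs_int hpt
  _ = (∫ ω, ‖M n ω‖ ^ q + G ω ∂P) + ∫ ω, 2 ^ q * ‖D ω‖ ^ q ∂P := by
        have i1 : Integrable (fun ω => ‖M n ω‖ ^ q + G ω) P := (hint n).add hG_int
        have i2 : Integrable (fun ω => 2 ^ q * ‖D ω‖ ^ q) P := hDq_int.const_mul _
        exact integral_add i1 i2
  _ = (∫ ω, ‖M n ω‖ ^ q ∂P) + (∫ ω, G ω ∂P) + ∫ ω, 2 ^ q * ‖D ω‖ ^ q ∂P := by
        rw [integral_add (hint n) hG_int]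
  _ = (∫ ω, ‖M n ω‖ ^ q ∂P) + 2 ^ q * ∫ ω, ‖D ω‖ ^ q ∂P := by
        rw [hG_zero, add_zero, integral_const_mul]
end

section
/- Let (ℱ_n)_{n≥0} be a filtration and (B_n)_{n≥1} a sequence of events with B_n ∈ ℱ_n for all n. Set p_n := P(B_n | ℱ_{n−1}). Then almost surely on the event {∑_{i=1}^∞ p_i = ∞} one has (∑_{i=1}^n 1_{B_i}) / (∑_{i=1}^n p_i) → 1 as n → ∞, and almost surely on the event {∑_{i=1}^∞ p_i < ∞} the series ∑_{i=1}^∞ 1_{B_i} converges (i.e. only finitely many B_i occur). -/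
open MeasureTheory ProbabilityTheory Filter Finset Asymptotics Topology
open scoped NNReal ENNReal

open MeasureTheory ProbabilityTheory Filter Finset Asymptotics Topology
open scoped NNReal ENNReal

lemma sum_Icc_one_eq {M : Type*} [AddCommMonoid M] (f : ℕ → M) (n : ℕ) :
    ∑ i ∈ Finset.Icc 1 n, f i = ∑ k ∈ Finset.range n, f (k + 1) := by
  induction n with
  | zero => simp
  | succ n ih =>
      rw [Finset.sum_Icc_succ_top (Nat.succ_le_succ n.zero_le), ih, Finset.sum_range_succ]

/-- Abel summation identity specialized to our setting. -/
lemma abel_aux {b : ℕ → ℝ} (x : ℕ → ℝ) (hb1 : ∀ n, 1 ≤ b n) (n : ℕ) :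
    ∑ k ∈ range n, x k =
      b n * (∑ k ∈ range n, x k / b k) -
        ∑ k ∈ range n, (b (k + 1) - b k) * (∑ j ∈ range (k + 1), x j / b j) := by
  induction n with
  | zero => simp
  | succ n ih =>
      have hbn : b n ≠ 0 := (lt_of_lt_of_le one_pos (hb1 n)).ne'
      have key : b n * (x n / b n) = x n := by field_simp
      rw [Finset.sum_range_succ, ih, Finset.sum_range_succ (fun k => (b (k+1) - b k) * _),
        Finset.sum_range_succ (fun k => x k / b k)]
      linear_combination -key

/-- Kronecker's lemma (special case). -/
lemma kronecker {b x : ℕ → ℝ} (hb1 : ∀ n, 1 ≤ b n) (hmono : Monotone b)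
    (hb : Tendsto b atTop atTop) {L : ℝ}
    (h : Tendsto (fun n => ∑ k ∈ range n, x k / b k) atTop (𝓝 L)) :
    Tendsto (fun n => (∑ k ∈ range n, x k) / b n) atTop (𝓝 0) := by
  set u : ℕ → ℝ := fun n => ∑ k ∈ range n, x k / b k with hu
  set w : ℕ → ℝ := fun k => b (k + 1) - b k with hw
  have hbne : ∀ n, b n ≠ 0 := fun n => (lt_of_lt_of_le one_pos (hb1 n)).ne'
  have key : ∀ n, (∑ k ∈ range n, x k) / b n
      = u n - (∑ k ∈ range n, w k * u (k + 1)) / b n := by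
    intro n
    rw [abel_aux x hb1 n, sub_div, mul_div_cancel_left₀ _ (hbne n)]
  have hsumw : ∀ n, ∑ k ∈ range n, w k = b n - b 0 := fun n => Finset.sum_range_sub b n
  have hw0 : ∀ k, 0 ≤ w k := fun k => sub_nonneg.2 (hmono (Nat.le_succ k))
  -- the weighted average tends to L
  have h2 : Tendsto (fun n => (∑ k ∈ range n, w k * u (k + 1)) / b n) atTop (𝓝 L) := by
    have hdecomp : ∀ n, (∑ k ∈ range n, w k * u (k + 1)) / b n
        = ((b n - b 0) * L) / b n + (∑ k ∈ range n, w k * (u (k + 1) - L)) / b n := by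
      intro n
      rw [← add_div]
      congr 1
      rw [← hsumw, Finset.sum_mul, ← Finset.sum_add_distrib]
      exact Finset.sum_congr rfl fun k _ => by ring
    rw [show (𝓝 L) = 𝓝 (L + 0) by rw [add_zero]]
    refine Tendsto.congr (fun n => (hdecomp n).symm) (Tendsto.add ?_ ?_)
    · -- ((b n - b 0) * L) / b n → L
      have heq : ∀ n, ((b n - b 0) * L) / b n = L - (b 0 * L) / b n := by
        intro n
        rw [sub_mul, sub_div, mul_div_cancel_left₀ _ (hbne n)]
      refine Tendsto.congr (fun n => (heq n).symm) ?_
      rw [show (𝓝 L) = 𝓝 (L - 0) by rw [sub_zero]]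
      exact tendsto_const_nhds.sub (Tendsto.div_atTop tendsto_const_nhds hb)
    · -- error term: little-o argument
      have he : Tendsto (fun k => u (k + 1) - L) atTop (𝓝 0) := by
        rw [← sub_self L]
        exact Tendsto.sub (h.comp (tendsto_add_atTop_nat 1)) tendsto_const_nhds
      have hlo : (fun k => w k * (u (k + 1) - L)) =o[atTop] w := by
        have := (isBigO_refl w atTop).mul_isLittleO ((isLittleO_one_iff ℝ).2 he)
        simpa using this
      have hsum_lo : (fun n => ∑ k ∈ range n, w k * (u (k + 1) - L)) =o[atTop]
          (fun n => ∑ k ∈ range n, w k) :=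
        hlo.sum_range hw0 (by
          simp only [hsumw]
          exact tendsto_atTop_add_const_right _ (-(b 0)) hb |>.congr (fun n => by ring))
      have hOb : (fun n => ∑ k ∈ range n, w k) =O[atTop] b := by
        rw [isBigO_iff]
        refine ⟨2, ?_⟩
        filter_upwards [hb.eventually_ge_atTop (|b 0|)] with n hn
        rw [hsumw]
        have h1 : (0:ℝ) < b n := lt_of_lt_of_le one_pos (hb1 n)
        rw [Real.norm_eq_abs, Real.norm_eq_abs, abs_of_pos h1]
        calc |b n - b 0| ≤ |b n| + |b 0| := abs_sub _ _
          _ ≤ b n + b n := by rw [abs_of_pos h1]; linarith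
          _ = 2 * b n := by ring
      exact (hsum_lo.trans_isBigO hOb).tendsto_div_nhds_zero
  have hfin := (h.sub h2).congr (fun n => (key n).symm)
  rw [show (𝓝 (0:ℝ)) = 𝓝 (L - L) by rw [sub_self]]
  exact hfin

/-- Deterministic endgame: from convergence of the weighted martingale sums and
divergence of `∑ q`, deduce the ratio limit. -/
lemma endgame {d q : ℕ → ℝ} (hd0 : ∀ k, 0 ≤ d k) (hq0 : ∀ k, 0 ≤ q k) (hq1 : ∀ k, q k ≤ 1)
    (hns : ¬ Summable q) {L : ℝ}
    (hM : Tendsto (fun n => ∑ k ∈ range n,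
      (1 + ∑ j ∈ range (k + 1), q j)⁻¹ * (d k - q k)) atTop (𝓝 L)) :
    Tendsto (fun n => (∑ k ∈ range n, d k) / (∑ k ∈ range n, q k)) atTop (𝓝 1) := by
  set A : ℕ → ℝ := fun n => ∑ k ∈ range n, q k with hA
  set D : ℕ → ℝ := fun n => ∑ k ∈ range n, d k with hD
  have hA0 : ∀ n, 0 ≤ A n := fun n => Finset.sum_nonneg fun k _ => hq0 k
  have hAtop : Tendsto A atTop atTop :=
    (not_summable_iff_tendsto_nat_atTop_of_nonneg hq0).1 hns
  set b : ℕ → ℝ := fun k => 1 + A (k + 1) with hb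
  have hb1 : ∀ k, 1 ≤ b k := fun k => le_add_of_nonneg_right (hA0 (k + 1))
  have hbmono : Monotone b := by
    apply monotone_nat_of_le_succ
    intro k
    have : A (k + 1) ≤ A (k + 2) := by
      apply Finset.sum_le_sum_of_subset_of_nonneg (Finset.range_subset_range.2 (by omega))
      intro i _ _; exact hq0 i
    simpa [hb] using this
  have hbtop : Tendsto b atTop atTop := by
    apply tendsto_atTop_add_const_left
    exact hAtop.comp (tendsto_add_atTop_nat 1)
  have hM' : Tendsto (fun n => ∑ k ∈ range n, (d k - q k) / b k) atTop (𝓝 L) := by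
    refine hM.congr fun n => Finset.sum_congr rfl fun k _ => ?_
    rw [div_eq_mul_inv, mul_comm]
  have hK : Tendsto (fun n => (D n - A n) / b n) atTop (𝓝 0) := by
    have := kronecker hb1 hbmono hbtop hM'
    refine this.congr fun n => ?_
    rw [← Finset.sum_sub_distrib]
  have hbA : Tendsto (fun n => b n / A n) atTop (𝓝 1) := by
    have h1 : Tendsto (fun n => (1:ℝ) / A n) atTop (𝓝 0) :=
      Tendsto.div_atTop tendsto_const_nhds hAtop
    have h2 : Tendsto (fun n => q n / A n) atTop (𝓝 0) := by
      apply squeeze_zero' (g := fun n => 1 / A n)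
      · filter_upwards [hAtop.eventually_ge_atTop 0] with n hn
        exact div_nonneg (hq0 n) hn
      · filter_upwards [hAtop.eventually_ge_atTop 1] with n hn
        exact (div_le_div_iff_of_pos_right (by linarith : (0:ℝ) < A n)).2 (hq1 n)
      · exact h1
    have heq : ∀ᶠ n in atTop, b n / A n = 1 / A n + 1 + q n / A n := by
      filter_upwards [hAtop.eventually_ge_atTop 1] with n hn
      have hAne : A n ≠ 0 := by linarith
      have hbn : b n = 1 + A n + q n := by
        simp only [hb, hA, Finset.sum_range_succ]
        ring
      rw [hbn, add_div, add_div, div_self hAne]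
    have h3 : Tendsto (fun n => 1 / A n + 1 + q n / A n) atTop (𝓝 (0 + 1 + 0)) :=
      (h1.add (tendsto_const_nhds (α := ℕ) (x := (1:ℝ)))).add h2
    rw [show (0:ℝ) + 1 + 0 = 1 by ring] at h3
    exact h3.congr' (heq.mono fun n hn => hn.symm)
  have hfrac : Tendsto (fun n => (D n - A n) / A n) atTop (𝓝 0) := by
    have hprod := hK.mul hbA
    rw [zero_mul] at hprod
    refine hprod.congr' ?_
    filter_upwards [hAtop.eventually_ge_atTop 1] with n hn
    have hbne : b n ≠ 0 := by have := hb1 n; linarith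
    field_simp
  have hfinal : Tendsto (fun n => 1 + (D n - A n) / A n) atTop (𝓝 (1 + 0)) :=
    (tendsto_const_nhds (α := ℕ) (x := (1:ℝ))).add hfrac
  rw [add_zero] at hfinal
  refine (hfinal.congr' ?_ : Tendsto (fun n => D n / A n) atTop (𝓝 1))
  filter_upwards [hAtop.eventually_ge_atTop 1] with n hn
  have hAne : A n ≠ 0 := by linarith
  rw [sub_div, div_self hAne]
  ring

theorem conditional_borel_cantelli
    {Ω : Type*} {m0 : MeasurableSpace Ω} (P : Measure Ω) [IsProbabilityMeasure P]
    (ℱ : Filtration ℕ m0) (B : ℕ → Set Ω) (hB : ∀ n, 1 ≤ n → MeasurableSet[ℱ n] (B n))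
    (p : ℕ → Ω → ℝ)
    (hp : ∀ n, 1 ≤ n → p n = P[(B n).indicator (fun _ => (1:ℝ)) | ℱ (n - 1)]) :
    ∀ᵐ ω ∂P,
      (¬ Summable (fun i => p (i + 1) ω) →
        Tendsto (fun n => (∑ i ∈ Finset.Icc 1 n, (B i).indicator (fun _ => (1:ℝ)) ω) /
          (∑ i ∈ Finset.Icc 1 n, p i ω)) atTop (nhds 1)) ∧
      (Summable (fun i => p (i + 1) ω) →
        ∃ L, Tendsto (fun n => ∑ i ∈ Finset.Icc 1 n, (B i).indicator (fun _ => (1:ℝ)) ω)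
          atTop (nhds L)) := by
  classical
  set d : ℕ → Ω → ℝ := fun k => (B (k + 1)).indicator (fun _ => (1:ℝ)) with hddef
  set q : ℕ → Ω → ℝ := fun k => p (k + 1) with hqdef
  have hq : ∀ k, q k = P[d k | ℱ k] := by
    intro k
    have := hp (k + 1) (Nat.le_add_left 1 k)
    simpa using this
  set A : ℕ → Ω → ℝ := fun n ω => ∑ k ∈ Finset.range n, q k ω with hAdef
  set c : ℕ → Ω → ℝ := fun k ω => (1 + A (k + 1) ω)⁻¹ with hcdef
  set M : ℕ → Ω → ℝ := fun n ω => ∑ k ∈ Finset.range n, c k ω * (d k ω - q k ω) with hMdef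
  -- basic pointwise facts about d
  have hd01 : ∀ k ω, 0 ≤ d k ω ∧ d k ω ≤ 1 := by
    intro k ω
    constructor
    · exact Set.indicator_nonneg (fun _ _ => zero_le_one) ω
    · classical
      by_cases h : ω ∈ B (k + 1) <;> simp [hddef, h]
  have hdsq : ∀ k ω, d k ω * d k ω = d k ω := by
    intro k ω
    by_cases h : ω ∈ B (k + 1) <;> simp [hddef, h]
  -- measurability
  have hdmeas : ∀ k, StronglyMeasurable[ℱ (k + 1)] (d k) := fun k =>
    stronglyMeasurable_const.indicator (hB (k + 1) (Nat.le_add_left 1 k))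
  have hdint : ∀ k, Integrable (d k) P := fun k =>
    IntegrableOn.integrable_indicator (integrable_const 1)
      (ℱ.le _ _ (hB (k + 1) (Nat.le_add_left 1 k)))
  have hqmeas : ∀ k, StronglyMeasurable[ℱ k] (q k) := fun k =>
    (hq k) ▸ stronglyMeasurable_condExp
  have hqint : ∀ k, Integrable (q k) P := fun k => (hq k) ▸ integrable_condExp
  have hAmeas : ∀ n, StronglyMeasurable[ℱ n] (fun ω => A (n + 1) ω) := by
    intro n
    apply Finset.stronglyMeasurable_fun_sum
    intro k hk
    exact (hqmeas k).mono (ℱ.mono (Nat.lt_succ_iff.mp (Finset.mem_range.mp hk)))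
  have hcmeas : ∀ k, StronglyMeasurable[ℱ k] (c k) := fun k =>
    ((stronglyMeasurable_const.add (hAmeas k)).measurable.inv).stronglyMeasurable
  -- a.e. bounds for q
  have hq01 : ∀ᵐ ω ∂P, ∀ k, 0 ≤ q k ω ∧ q k ω ≤ 1 := by
    rw [ae_all_iff]
    intro k
    have h0 : 0 ≤ᵐ[P] q k := by
      rw [hq k]
      exact condExp_nonneg (Eventually.of_forall fun ω => (hd01 k ω).1)
    have h1 : q k ≤ᵐ[P] fun _ => (1:ℝ) := by
      rw [hq k]
      have := condExp_mono (μ := P) (m := ℱ k) (hdint k) (integrable_const (1:ℝ))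
        (Eventually.of_forall fun ω => (hd01 k ω).2)
      rwa [condExp_const (ℱ.le k)] at this
    filter_upwards [h0, h1] with ω h0ω h1ω
    exact ⟨h0ω, h1ω⟩
  -- a.e. bound on increments
  have hcbd : ∀ᵐ ω ∂P, ∀ k, ‖c k ω‖ ≤ 1 := by
    filter_upwards [hq01] with ω hω k
    have hA0 : 0 ≤ A (k + 1) ω := Finset.sum_nonneg fun j _ => (hω j).1
    rw [Real.norm_eq_abs, abs_of_pos (by positivity)]
    rw [inv_le_one_iff₀]
    right; linarith
  have hΔint : ∀ k, Integrable (fun ω => c k ω * (d k ω - q k ω)) P := by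
    intro k
    refine Integrable.bdd_mul (c := 1) ((hdint k).sub (hqint k))
      ((hcmeas k).mono (ℱ.le k)).aestronglyMeasurable ?_
    filter_upwards [hcbd] with ω hω using hω k
  have hMint : ∀ n, Integrable (M n) P := by
    intro n
    exact integrable_finset_sum _ fun k _ => hΔint k
  have hMmeas : ∀ n, StronglyMeasurable[ℱ n] (M n) := by
    intro n
    apply Finset.stronglyMeasurable_fun_sum
    intro k hk
    have hkn : k < n := Finset.mem_range.mp hk
    exact ((hcmeas k).mono (ℱ.mono hkn.le)).mul
      (((hdmeas k).mono (ℱ.mono hkn)).sub ((hqmeas k).mono (ℱ.mono hkn.le)))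
  -- martingale property
  have hmart : Martingale M ℱ P := by
    refine martingale_nat (fun n => hMmeas n) hMint ?_
    intro n
    have hsucc : M (n + 1) = M n + fun ω => c n ω * (d n ω - q n ω) := by
      funext ω
      simp only [hMdef, Finset.sum_range_succ]
      rfl
    have h1 : P[M (n + 1)|ℱ n] =ᵐ[P] P[M n|ℱ n] + P[fun ω => c n ω * (d n ω - q n ω)|ℱ n] := by
      rw [hsucc]
      exact condExp_add (hMint n) (hΔint n) _
    have h2 : P[M n|ℱ n] = M n := condExp_of_stronglyMeasurable (ℱ.le n) (hMmeas n) (hMint n)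
    have h3 : P[fun ω => c n ω * (d n ω - q n ω)|ℱ n] =ᵐ[P] 0 := by
      have hmul : P[fun ω => c n ω * (d n ω - q n ω)|ℱ n]
          =ᵐ[P] c n * P[fun ω => d n ω - q n ω|ℱ n] :=
        condExp_mul_of_stronglyMeasurable_left (hcmeas n) (hΔint n) ((hdint n).sub (hqint n))
      have hsub : P[fun ω => d n ω - q n ω|ℱ n] =ᵐ[P] 0 := by
        have : P[d n - q n|ℱ n] =ᵐ[P] P[d n|ℱ n] - P[q n|ℱ n] :=
          condExp_sub (hdint n) (hqint n) _
        have hqq : P[q n|ℱ n] = q n :=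
          condExp_of_stronglyMeasurable (ℱ.le n) (hqmeas n) (hqint n)
        have hdd : P[d n|ℱ n] = q n := (hq n).symm
        refine EventuallyEq.trans (by exact this) ?_
        rw [hdd, hqq]
        simp
      refine hmul.trans ?_
      filter_upwards [hsub] with ω hω
      simp only [Pi.mul_apply, Pi.zero_apply] at hω ⊢
      rw [hω, mul_zero]
    filter_upwards [h1, h3] with ω h1ω h3ω
    rw [h1ω, h2]
    simp only [Pi.add_apply, Pi.zero_apply] at h3ω ⊢
    rw [h3ω, add_zero]
  -- pull-out lemma for integrals
  have hgm0 : ∀ n (g : Ω → ℝ), StronglyMeasurable[ℱ n] g → AEStronglyMeasurable g P :=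
    fun n g hg => (hg.mono (ℱ.le n)).aestronglyMeasurable
  have hpull : ∀ n (g : Ω → ℝ) (C : ℝ), StronglyMeasurable[ℱ n] g →
      (∀ᵐ ω ∂P, ‖g ω‖ ≤ C) →
      ∫ ω, g ω * d n ω ∂P = ∫ ω, g ω * q n ω ∂P := by
    intro n g C hgmeas hC
    have hgd : Integrable (fun ω => g ω * d n ω) P :=
      (hdint n).bdd_mul (hgm0 n g hgmeas) hC
    have hgq : Integrable (fun ω => g ω * q n ω) P :=
      (hqint n).bdd_mul (hgm0 n g hgmeas) hC
    have key : P[fun ω => g ω * d n ω|ℱ n] =ᵐ[P] fun ω => g ω * (P[d n|ℱ n]) ω :=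
      condExp_mul_of_stronglyMeasurable_left hgmeas hgd (hdint n)
    calc ∫ ω, g ω * d n ω ∂P = ∫ ω, (P[fun ω => g ω * d n ω|ℱ n]) ω ∂P :=
          (integral_condExp (ℱ.le n)).symm
      _ = ∫ ω, g ω * (P[d n|ℱ n]) ω ∂P := integral_congr_ae key
      _ = ∫ ω, g ω * q n ω ∂P := by rw [← hq n]
  -- a.e. bound on martingale increments and values
  have hΔbd : ∀ᵐ ω ∂P, ∀ k, |c k ω * (d k ω - q k ω)| ≤ 1 := by
    filter_upwards [hq01, hcbd] with ω hω hc k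
    have h1 : |d k ω - q k ω| ≤ 1 := by
      rw [abs_sub_le_iff]
      constructor
      · have := (hd01 k ω).2; have := (hω k).1; linarith
      · have := (hd01 k ω).1; have := (hω k).2; linarith
    calc |c k ω * (d k ω - q k ω)| = |c k ω| * |d k ω - q k ω| := abs_mul _ _
      _ ≤ 1 * 1 := by
          refine mul_le_mul ?_ h1 (abs_nonneg _) zero_le_one
          simpa [Real.norm_eq_abs] using hc k
      _ = 1 := one_mul 1
  have hMbd : ∀ᵐ ω ∂P, ∀ n, |M n ω| ≤ n := by
    filter_upwards [hΔbd] with ω hω n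
    calc |M n ω| ≤ ∑ k ∈ Finset.range n, |c k ω * (d k ω - q k ω)| :=
          Finset.abs_sum_le_sum_abs _ _
      _ ≤ ∑ _k ∈ Finset.range n, (1:ℝ) := Finset.sum_le_sum fun k _ => hω k
      _ = n := by simp
  -- more integrability
  have hM2int : ∀ n, Integrable (fun ω => M n ω * M n ω) P := fun n =>
    Integrable.bdd_mul (c := n) (hMint n) (hgm0 n (M n) (hMmeas n)) (by
      filter_upwards [hMbd] with ω hω using by rw [Real.norm_eq_abs]; exact hω n)
  have hAinvmeas : ∀ n, AEStronglyMeasurable (fun ω => (1 + A n ω)⁻¹) P := by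
    intro n
    have : StronglyMeasurable (fun ω => A n ω) := by
      apply Finset.stronglyMeasurable_fun_sum
      intro k _
      exact (hqmeas k).mono (ℱ.le k)
    exact ((stronglyMeasurable_const.add this).measurable.inv).stronglyMeasurable.aestronglyMeasurable
  have hainv : ∀ᵐ ω ∂P, ∀ n, 0 ≤ (1 + A n ω)⁻¹ ∧ (1 + A n ω)⁻¹ ≤ 1 := by
    filter_upwards [hq01] with ω hω n
    have hA0 : 0 ≤ A n ω := Finset.sum_nonneg fun j _ => (hω j).1
    constructor
    · positivity
    · rw [inv_le_one_iff₀]; right; linarith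
  have hAinvint : ∀ n, Integrable (fun ω => (1 + A n ω)⁻¹) P := by
    intro n
    refine Integrable.mono' (integrable_const (1:ℝ)) (hAinvmeas n) ?_
    filter_upwards [hainv] with ω hω
    rw [Real.norm_eq_abs, abs_of_nonneg (hω n).1]
    exact (hω n).2
  -- orthogonality of increments
  have horth : ∀ n, ∫ ω, M n ω * (c n ω * (d n ω - q n ω)) ∂P = 0 := by
    intro n
    set g : Ω → ℝ := fun ω => M n ω * c n ω with hgdef
    have hgmeas : StronglyMeasurable[ℱ n] g := (hMmeas n).mul (hcmeas n)
    have hgbd : ∀ᵐ ω ∂P, ‖g ω‖ ≤ n := by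
      filter_upwards [hMbd, hcbd] with ω h1 h2
      rw [Real.norm_eq_abs, hgdef]
      calc |M n ω * c n ω| = |M n ω| * |c n ω| := abs_mul _ _
        _ ≤ n * 1 := mul_le_mul (h1 n) (by simpa [Real.norm_eq_abs] using h2 n)
            (abs_nonneg _) (Nat.cast_nonneg n)
        _ = n := mul_one _
    have hgd : Integrable (fun ω => g ω * d n ω) P :=
      (hdint n).bdd_mul (hgm0 n g hgmeas) hgbd
    have hgq : Integrable (fun ω => g ω * q n ω) P :=
      (hqint n).bdd_mul (hgm0 n g hgmeas) hgbd
    have hid : (fun ω => M n ω * (c n ω * (d n ω - q n ω)))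
        = fun ω => g ω * d n ω - g ω * q n ω := by
      funext ω; rw [hgdef]; ring
    rw [hid, integral_sub hgd hgq, hpull n g n hgmeas hgbd, sub_self]
  -- variance bound
  have hvar : ∀ n, ∫ ω, (c n ω * (d n ω - q n ω)) * (c n ω * (d n ω - q n ω)) ∂P ≤
      (∫ ω, (1 + A n ω)⁻¹ ∂P) - ∫ ω, (1 + A (n + 1) ω)⁻¹ ∂P := by
    intro n
    set g : Ω → ℝ := fun ω => c n ω * c n ω * (1 - 2 * q n ω) with hgdef
    have hgmeas : StronglyMeasurable[ℱ n] g :=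
      ((hcmeas n).mul (hcmeas n)).mul
        (stronglyMeasurable_const.sub (stronglyMeasurable_const.mul (hqmeas n)))
    have hgbd : ∀ᵐ ω ∂P, ‖g ω‖ ≤ 1 := by
      filter_upwards [hq01, hcbd] with ω h1 h2
      rw [Real.norm_eq_abs, hgdef]
      have hc1 : |c n ω| ≤ 1 := by simpa [Real.norm_eq_abs] using h2 n
      have h12 : |1 - 2 * q n ω| ≤ 1 := by
        rw [abs_le]; have := (h1 n).1; have := (h1 n).2; constructor <;> linarith
      calc |c n ω * c n ω * (1 - 2 * q n ω)|
          = |c n ω| * |c n ω| * |1 - 2 * q n ω| := by rw [abs_mul, abs_mul]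
        _ ≤ 1 * 1 * 1 := by
            refine mul_le_mul (mul_le_mul hc1 hc1 (abs_nonneg _) zero_le_one) h12
              (abs_nonneg _) (by norm_num)
        _ = 1 := by norm_num
    have hgd : Integrable (fun ω => g ω * d n ω) P :=
      (hdint n).bdd_mul (hgm0 n g hgmeas) hgbd
    have hgq : Integrable (fun ω => g ω * q n ω) P :=
      (hqint n).bdd_mul (hgm0 n g hgmeas) hgbd
    have hccqmeas : StronglyMeasurable[ℱ n] (fun ω => c n ω * c n ω * q n ω) :=
      ((hcmeas n).mul (hcmeas n)).mul (hqmeas n)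
    have hccqbd : ∀ᵐ ω ∂P, ‖c n ω * c n ω * q n ω‖ ≤ 1 := by
      filter_upwards [hq01, hcbd] with ω h1 h2
      rw [Real.norm_eq_abs]
      have hc1 : |c n ω| ≤ 1 := by simpa [Real.norm_eq_abs] using h2 n
      have hq1' : |q n ω| ≤ 1 := by
        rw [abs_le]; have := (h1 n).1; have := (h1 n).2; constructor <;> linarith
      calc |c n ω * c n ω * q n ω| = |c n ω| * |c n ω| * |q n ω| := by rw [abs_mul, abs_mul]
        _ ≤ 1 * 1 * 1 := by
            refine mul_le_mul (mul_le_mul hc1 hc1 (abs_nonneg _) zero_le_one) hq1'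
              (abs_nonneg _) (by norm_num)
        _ = 1 := by norm_num
    have hccq2 : Integrable (fun ω => (c n ω * c n ω * q n ω) * q n ω) P :=
      (hqint n).bdd_mul (hgm0 n _ hccqmeas) hccqbd
    have hid : (fun ω => (c n ω * (d n ω - q n ω)) * (c n ω * (d n ω - q n ω)))
        = fun ω => g ω * d n ω + (c n ω * c n ω * q n ω) * q n ω := by
      funext ω
      rw [hgdef]
      linear_combination (c n ω * c n ω) * hdsq n ω
    rw [hid, integral_add hgd hccq2, hpull n g 1 hgmeas hgbd,
      ← integral_add hgq hccq2, ← integral_sub (hAinvint n) (hAinvint (n + 1))]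
    refine integral_mono_ae ((hgq.add hccq2)) ((hAinvint n).sub (hAinvint (n + 1))) ?_
    filter_upwards [hq01] with ω hω
    have hA0 : 0 ≤ A n ω := Finset.sum_nonneg fun j _ => (hω j).1
    have hq0 : 0 ≤ q n ω := (hω n).1
    have hq1' : q n ω ≤ 1 := (hω n).2
    have hAsucc : A (n + 1) ω = A n ω + q n ω := Finset.sum_range_succ _ n
    set x : ℝ := 1 + A n ω with hx
    set y : ℝ := 1 + A (n + 1) ω with hy
    have hxy : y = x + q n ω := by rw [hx, hy, hAsucc]; ring
    have hx1 : 1 ≤ x := by rw [hx]; linarith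
    have hy1 : 1 ≤ y := by rw [hxy]; linarith
    have hx0 : 0 < x := by linarith
    have hy0 : 0 < y := by linarith
    have hcval : c n ω = y⁻¹ := rfl
    show g ω * q n ω + c n ω * c n ω * q n ω * q n ω ≤ x⁻¹ - y⁻¹
    rw [hgdef, hcval]
    have hxinv : x⁻¹ - y⁻¹ = q n ω / (x * y) := by
      rw [inv_sub_inv hx0.ne' hy0.ne', hxy]; ring
    have hlhs : y⁻¹ * y⁻¹ * (1 - 2 * q n ω) * q n ω + y⁻¹ * y⁻¹ * q n ω * q n ω
        = q n ω * (1 - q n ω) / (y * y) := by field_simp; ring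
    rw [hlhs, hxinv]
    refine div_le_div₀ (by positivity) ?_ (by positivity) ?_
    · nlinarith
    · nlinarith
  -- second moment induction
  have hMΔint : ∀ n, Integrable (fun ω => M n ω * (c n ω * (d n ω - q n ω))) P := by
    intro n
    refine Integrable.bdd_mul (c := n) (hΔint n) (hgm0 n (M n) (hMmeas n)) ?_
    filter_upwards [hMbd] with ω hω using by rw [Real.norm_eq_abs]; exact hω n
  have hΔ2int : ∀ n, Integrable
      (fun ω => (c n ω * (d n ω - q n ω)) * (c n ω * (d n ω - q n ω))) P := by
    intro n
    refine Integrable.bdd_mul (c := 1) (hΔint n)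
      ((hΔint n).aestronglyMeasurable) ?_
    filter_upwards [hΔbd] with ω hω using by rw [Real.norm_eq_abs]; exact hω n
  have hind : ∀ n, (∫ ω, M n ω * M n ω ∂P) + (∫ ω, (1 + A n ω)⁻¹ ∂P) ≤ 1 := by
    intro n
    induction n with
    | zero =>
        have h1 : (fun ω => M 0 ω * M 0 ω) = fun _ => (0:ℝ) := by
          funext ω; simp [hMdef]
        have h2 : (fun ω => (1 + A 0 ω)⁻¹) = fun _ => (1:ℝ) := by
          funext ω; simp [hAdef]
        rw [h1, h2]
        simp
    | succ n ih =>
        have hexp : (fun ω => M (n + 1) ω * M (n + 1) ω)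
            = fun ω => M n ω * M n ω + (2 * (M n ω * (c n ω * (d n ω - q n ω)))
              + (c n ω * (d n ω - q n ω)) * (c n ω * (d n ω - q n ω))) := by
          funext ω
          have : M (n + 1) ω = M n ω + c n ω * (d n ω - q n ω) := Finset.sum_range_succ _ n
          rw [this]; ring
        have h2a : Integrable (fun ω => 2 * (M n ω * (c n ω * (d n ω - q n ω)))) P :=
          (hMΔint n).const_mul 2
        have h2' : Integrable (fun ω => 2 * (M n ω * (c n ω * (d n ω - q n ω)))
            + (c n ω * (d n ω - q n ω)) * (c n ω * (d n ω - q n ω))) P :=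
          h2a.add (hΔ2int n)
        have hI : ∫ ω, M (n + 1) ω * M (n + 1) ω ∂P
            = (∫ ω, M n ω * M n ω ∂P) + (2 * (∫ ω, M n ω * (c n ω * (d n ω - q n ω)) ∂P)
              + ∫ ω, (c n ω * (d n ω - q n ω)) * (c n ω * (d n ω - q n ω)) ∂P) := by
          rw [hexp, integral_add (hM2int n) h2', integral_add h2a (hΔ2int n),
            integral_const_mul]
        rw [hI, horth n]
        have := hvar n
        linarith
  have hI0 : ∀ n, 0 ≤ ∫ ω, (1 + A n ω)⁻¹ ∂P := by
    intro n
    refine integral_nonneg_of_ae ?_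
    filter_upwards [hainv] with ω hω using (hω n).1
  -- L¹ bound
  have hL1 : ∀ n, ∫ ω, ‖M n ω‖ ∂P ≤ 2 := by
    intro n
    have habs : ∀ x : ℝ, |x| ≤ 1 + x * x := by
      intro x
      nlinarith [sq_nonneg (|x| - 1), sq_abs x, abs_nonneg x]
    calc ∫ ω, ‖M n ω‖ ∂P ≤ ∫ ω, (1 + M n ω * M n ω) ∂P := by
          refine integral_mono (hMint n).norm ((integrable_const 1).add (hM2int n)) ?_
          intro ω
          simpa [Real.norm_eq_abs] using habs (M n ω)
      _ = 1 + ∫ ω, M n ω * M n ω ∂P := by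
          rw [integral_add (integrable_const 1) (hM2int n)]
          simp
      _ ≤ 2 := by
          have := hind n; have := hI0 n; linarith
  have hbddE : ∀ n, eLpNorm (M n) 1 P ≤ (2 : ℝ≥0) := by
    intro n
    rw [eLpNorm_one_eq_lintegral_enorm, ← ofReal_integral_norm_eq_lintegral_enorm (hMint n)]
    calc ENNReal.ofReal (∫ ω, ‖M n ω‖ ∂P) ≤ ENNReal.ofReal 2 :=
          ENNReal.ofReal_le_ofReal (hL1 n)
      _ = ((2 : ℝ≥0) : ℝ≥0∞) := by norm_num
  have hconv := hmart.submartingale.exists_ae_tendsto_of_bdd hbddE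
  -- generalized Borel-Cantelli iff (for part 2)
  set s : ℕ → Set Ω := fun n => if n = 0 then (∅ : Set Ω) else B n with hsdef
  have hs : ∀ n, MeasurableSet[ℱ n] (s n) := by
    intro n
    match n with
    | 0 => simp only [hsdef, if_pos rfl]; exact @MeasurableSet.empty _ (ℱ 0)
    | (m + 1) =>
        simp only [hsdef, if_neg (Nat.succ_ne_zero m)]
        exact hB (m + 1) (Nat.le_add_left 1 m)
  have hsd : ∀ k, (s (k + 1)).indicator (1 : Ω → ℝ) = d k := by
    intro k
    simp only [hsdef, if_neg (Nat.succ_ne_zero k)]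
    rfl
  have hiff := tendsto_sum_indicator_atTop_iff' (μ := P) (ℱ := ℱ) hs
  simp only [hsd] at hiff
  simp only [← hq] at hiff
  -- final assembly
  filter_upwards [hq01, hconv, hiff] with ω hω hLc hiffω
  have hq0ω : ∀ k, 0 ≤ q k ω := fun k => (hω k).1
  have hq1ω : ∀ k, q k ω ≤ 1 := fun k => (hω k).2
  obtain ⟨L, hL⟩ := hLc
  constructor
  · intro hns
    have hns' : ¬ Summable (fun i => q i ω) := hns
    have hMω : Tendsto (fun n => ∑ k ∈ Finset.range n,
        (1 + ∑ j ∈ Finset.range (k + 1), q j ω)⁻¹ * (d k ω - q k ω)) atTop (𝓝 L) := hL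
    have hend := endgame (fun k => (hd01 k ω).1) hq0ω hq1ω hns' hMω
    refine hend.congr fun n => ?_
    rw [sum_Icc_one_eq (fun i => (B i).indicator (fun _ => (1:ℝ)) ω) n,
      sum_Icc_one_eq (fun i => p i ω) n]
  · intro hsum
    have hsum' : Summable (fun i => q i ω) := hsum
    have hmono : Monotone (fun n => ∑ k ∈ Finset.range n, d k ω) := by
      apply monotone_nat_of_le_succ
      intro n
      rw [Finset.sum_range_succ]
      exact le_add_of_nonneg_right (hd01 n ω).1
    rcases tendsto_of_monotone hmono with htop | ⟨L', hL'⟩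
    · exfalso
      have hnot := (summable_iff_not_tendsto_nat_atTop_of_nonneg hq0ω).1 hsum'
      exact hnot (hiffω.1 htop)
    · refine ⟨L', ?_⟩
      refine hL'.congr fun n => ?_
      rw [sum_Icc_one_eq (fun i => (B i).indicator (fun _ => (1:ℝ)) ω) n]
end

section
/- Let (w_n)_{n≥1} be a sequence of non-negative reals with w_1 > 0, set W_n = ∑_{i=1}^n w_i, and suppose there exist constants C > 0, γ > 0, ε ∈ (0,1) such that W_n = C n^γ (1 + O(n^{−ε})). Then there exists ε' > 0 such that ∑_{i=n}^∞ (w_i/W_i)² = O(n^{−ε'}) and there exists a constant c such that ∑_{i=2}^n w_i/W_i = γ log n + c + O(n^{−ε'}) as n → ∞. -/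
open Filter Asymptotics

private lemma log_one_sub_bound {x : ℝ} (hx : |x| ≤ 1/2) :
    |x + Real.log (1 - x)| ≤ 2 * x ^ 2 := by
  have h1 : |x| < 1 := lt_of_le_of_lt hx (by norm_num)
  have h := Real.abs_log_sub_add_sum_range_le h1 1
  simp only [Finset.sum_range_one, pow_one, Nat.cast_zero, zero_add, Nat.cast_one, div_one] at h
  calc |x + Real.log (1 - x)| ≤ |x| ^ (1+1) / (1 - |x|) := h
    _ ≤ |x| ^ 2 / (1/2) := by
        apply div_le_div_of_nonneg_left (by positivity) (by norm_num) (by linarith)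
    _ = 2 * x ^ 2 := by rw [sq_abs]; ring

private lemma one_sub_le_rpow_aux {t p : ℝ} (ht0 : 0 ≤ t) (ht1 : t ≤ 1) (hp : 0 < p) :
    1 - (max p 1) * t ≤ (1 - t) ^ p := by
  rcases lt_or_ge t 1 with ht | ht
  · have h1t : (0:ℝ) < 1 - t := by linarith
    have hb : 1 - max p 1 * t ≤ (1 - t) ^ (max p 1) := by
      have := one_add_mul_self_le_rpow_one_add (s := -t) (by linarith) (le_max_right p 1)
      have h2 : 1 + max p 1 * (-t) = 1 - max p 1 * t := by ring
      rw [h2] at this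
      simpa [sub_eq_add_neg] using this
    refine hb.trans (Real.rpow_le_rpow_of_exponent_ge h1t (by linarith) (le_max_left p 1))
  · have ht' : t = 1 := le_antisymm ht1 ht
    have h1 : 1 - max p 1 * t ≤ 0 := by
      have := le_max_right p 1
      nlinarith
    exact h1.trans (Real.rpow_nonneg (by linarith) p)

private lemma rpow_neg_anti {a b e : ℝ} (ha : 0 < a) (hab : a ≤ b) (he : 0 ≤ e) :
    b ^ (-e) ≤ a ^ (-e) := by
  rw [Real.rpow_neg (by linarith), Real.rpow_neg ha.le]
  exact inv_anti₀ (Real.rpow_pos_of_pos ha e) (Real.rpow_le_rpow ha.le hab he)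

private lemma rpow_neg_double {a b e : ℝ} (hb : 0 < b) (hab : a ≤ 2 * b) (he0 : 0 ≤ e)
    (he1 : e ≤ 1) (ha : 0 < a) : b ^ (-e) ≤ 2 * a ^ (-e) := by
  have h1 : a ^ e ≤ 2 * b ^ e := by
    calc a ^ e ≤ (2 * b) ^ e := Real.rpow_le_rpow ha.le hab he0
      _ = 2 ^ e * b ^ e := Real.mul_rpow (by norm_num) hb.le
      _ ≤ 2 * b ^ e := by
          have h2 : (2:ℝ) ^ e ≤ 2 ^ (1:ℝ) := Real.rpow_le_rpow_of_exponent_le one_le_two he1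
          rw [Real.rpow_one] at h2
          exact mul_le_mul_of_nonneg_right h2 (Real.rpow_nonneg hb.le e)
  have hae : (0:ℝ) < a ^ e := Real.rpow_pos_of_pos ha e
  have hbe : (0:ℝ) < b ^ e := Real.rpow_pos_of_pos hb e
  rw [Real.rpow_neg hb.le, Real.rpow_neg ha.le]
  rw [inv_le_iff_one_le_mul₀ hbe]
  have h2 : (1:ℝ) ≤ (2 * b ^ e) / a ^ e := by
    rw [le_div_iff₀ hae]; linarith
  calc (1:ℝ) ≤ (2 * b ^ e) / a ^ e := h2
    _ = 2 * (a ^ e)⁻¹ * b ^ e := by ring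

set_option maxHeartbeats 3200000 in
theorem weight_ratio_asymptotics
    (w : ℕ → ℝ) (hw : ∀ n, 0 ≤ w n) (hw1 : 0 < w 1)
    (W : ℕ → ℝ) (hW : ∀ n, W n = ∑ i ∈ Finset.Icc 1 n, w i)
    (C γ ε : ℝ) (hC : 0 < C) (hγ : 0 < γ) (hε : 0 < ε) (hε1 : ε < 1)
    (hWasymp : (fun n : ℕ => W n / (C * (n:ℝ) ^ γ) - 1) =O[atTop]
      (fun n : ℕ => (n:ℝ) ^ (-ε))) :
    ∃ ε' > (0:ℝ),
      ((fun n : ℕ => ∑' i : ℕ, (w (n + i) / W (n + i)) ^ 2)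
          =O[atTop] (fun n : ℕ => (n:ℝ) ^ (-ε'))) ∧
      ∃ c : ℝ,
        (fun n : ℕ => (∑ i ∈ Finset.Icc 2 n, w i / W i) - (γ * Real.log n + c))
          =O[atTop] (fun n : ℕ => (n:ℝ) ^ (-ε')) := by
  -- Basic facts about W
  have hWnonneg : ∀ n, 0 ≤ W n := fun n => by
    rw [hW]; exact Finset.sum_nonneg fun i _ => hw i
  have hWsucc : ∀ n, W (n + 1) = W n + w (n + 1) := fun n => by
    rw [hW (n + 1), Finset.sum_Icc_succ_top (by omega), ← hW n]
  have hWmono : Monotone W := monotone_nat_of_le_succ fun n => by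
    rw [hWsucc]; linarith [hw (n + 1)]
  have hW1 : W 1 = w 1 := by rw [hW]; simp
  have hWpos : ∀ n, 1 ≤ n → 0 < W n := fun n hn => (hW1 ▸ hw1).trans_le (hWmono hn)
  have hxnonneg : ∀ i, 0 ≤ w i / W i := fun i => div_nonneg (hw i) (hWnonneg i)
  -- extract the big-O constant
  obtain ⟨K, hK0, hKb⟩ := hWasymp.exists_pos
  rw [isBigOWith_iff] at hKb
  have hnorm : ∀ n : ℕ, ‖(n:ℝ) ^ (-ε)‖ = (n:ℝ) ^ (-ε) := fun n =>
    Real.norm_of_nonneg (Real.rpow_nonneg n.cast_nonneg _)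
  have htend : Tendsto (fun n : ℕ => (n:ℝ) ^ (-ε)) atTop (nhds 0) :=
    (tendsto_rpow_neg_atTop hε).comp tendsto_natCast_atTop_atTop
  set γ' : ℝ := max γ 1 with hγ'def
  set A : ℝ := 2 * (3 * K + γ') with hAdef
  set M : ℝ := 4 * (2:ℝ) ^ γ with hMdef
  have h2e : (2:ℝ) ^ (-ε) < 1 :=
    Real.rpow_lt_one_of_one_lt_of_neg one_lt_two (neg_lt_zero.mpr hε)
  have h2e0 : (0:ℝ) < (2:ℝ) ^ (-ε) := Real.rpow_pos_of_pos two_pos _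
  set D : ℝ := A * M / (1 - (2:ℝ) ^ (-ε)) with hDdef
  have hγ'1 : (1:ℝ) ≤ γ' := le_max_right γ 1
  have hA0 : 0 < A := by positivity
  have hM0 : 0 < M := by positivity
  have hD0 : 0 < D := by
    apply div_pos (by positivity); linarith
  have hAMD : A * M ≤ D := by
    rw [hDdef, le_div_iff₀ (by linarith)]
    nlinarith [mul_pos hA0 hM0]
  have hev1 : ∀ᶠ n : ℕ in atTop, K * (n:ℝ) ^ (-ε) ≤ 1/2 := by
    have h := (htend.const_mul K).eventually (eventually_le_nhds (by norm_num : K * 0 < 1/2))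
    simpa using h
  have hev2 : ∀ᶠ n : ℕ in atTop, A * (n:ℝ) ^ (-ε) ≤ 1/2 := by
    have h := (htend.const_mul A).eventually (eventually_le_nhds (by norm_num : A * 0 < 1/2))
    simpa using h
  obtain ⟨N₀, hN₀⟩ := eventually_atTop.mp ((hKb.and hev1).and hev2)
  set N : ℕ := max N₀ 2 with hNdef
  have hN2 : 2 ≤ N := le_max_right _ _
  -- bounds on W n for n ≥ N
  have hWb : ∀ n : ℕ, N ≤ n →
      C * (n:ℝ) ^ γ * (1 - K * (n:ℝ) ^ (-ε)) ≤ W n ∧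
      W n ≤ C * (n:ℝ) ^ γ * (1 + K * (n:ℝ) ^ (-ε)) := by
    intro n hn
    have hn0 : (0:ℝ) < (n:ℝ) := by
      have : 2 ≤ n := le_trans hN2 hn
      exact_mod_cast by omega
    have hP : (0:ℝ) < C * (n:ℝ) ^ γ := by positivity
    have h := (hN₀ n (le_trans (le_max_left _ _) hn)).1.1
    rw [hnorm, Real.norm_eq_abs, abs_le] at h
    constructor
    · have := (le_div_iff₀ hP).mp (by linarith : 1 - K * (n:ℝ) ^ (-ε) ≤ W n / (C * (n:ℝ) ^ γ))
      linarith
    · have := (div_le_iff₀ hP).mp (by linarith : W n / (C * (n:ℝ) ^ γ) ≤ 1 + K * (n:ℝ) ^ (-ε))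
      linarith
  have hKhalf : ∀ n : ℕ, N ≤ n → K * (n:ℝ) ^ (-ε) ≤ 1/2 := fun n hn =>
    (hN₀ n (le_trans (le_max_left _ _) hn)).1.2
  have hAhalf : ∀ n : ℕ, N ≤ n → A * (n:ℝ) ^ (-ε) ≤ 1/2 := fun n hn =>
    (hN₀ n (le_trans (le_max_left _ _) hn)).2
  have hWlo : ∀ n : ℕ, N ≤ n → C * (n:ℝ) ^ γ / 2 ≤ W n := by
    intro n hn
    have h := (hWb n hn).1
    have h2 := hKhalf n hn
    have hn0 : (0:ℝ) < (n:ℝ) := by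
      have : 2 ≤ n := le_trans hN2 hn
      exact_mod_cast by omega
    nlinarith [mul_nonneg (by positivity : (0:ℝ) ≤ C * (n:ℝ) ^ γ)
      (by linarith : (0:ℝ) ≤ 1/2 - K * (n:ℝ) ^ (-ε))]
  have hWup : ∀ n : ℕ, N ≤ n → W n ≤ 2 * C * (n:ℝ) ^ γ := by
    intro n hn
    have h := (hWb n hn).2
    have h2 := hKhalf n hn
    have hn0 : (0:ℝ) < (n:ℝ) := by
      have : 2 ≤ n := le_trans hN2 hn
      exact_mod_cast by omega
    nlinarith [mul_nonneg (by positivity : (0:ℝ) ≤ C * (n:ℝ) ^ γ)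
      (by linarith : (0:ℝ) ≤ 1 - K * (n:ℝ) ^ (-ε))]
  -- the key pointwise bound on w i / W i
  have hxA : ∀ i : ℕ, N + 1 ≤ i → w i / W i ≤ A * (i:ℝ) ^ (-ε) := by
    intro i hi
    obtain ⟨j, rfl⟩ : ∃ j, i = j + 1 := ⟨i - 1, by omega⟩
    have hjN : N ≤ j := by omega
    have hiN : N ≤ j + 1 := by omega
    have hj2 : 2 ≤ j := le_trans hN2 hjN
    have hb0 : (0:ℝ) < (j:ℝ) := by exact_mod_cast by omega
    have hb2 : (2:ℝ) ≤ (j:ℝ) := by exact_mod_cast hj2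
    have hcast : ((j + 1 : ℕ):ℝ) = (j:ℝ) + 1 := by push_cast; ring
    set b : ℝ := (j:ℝ) with hbdef
    set a : ℝ := (j:ℝ) + 1 with hadef
    have ha0 : (0:ℝ) < a := by linarith
    have ha1 : (1:ℝ) ≤ a := by linarith
    have h1a : (0:ℝ) ≤ 1 - 1/a := by
      rw [sub_nonneg, div_le_one ha0]; linarith
    have hWiup : W (j+1) ≤ C * a ^ γ * (1 + K * a ^ (-ε)) := by
      have := (hWb (j+1) hiN).2; rwa [hcast] at this
    have hWjlo : C * b ^ γ * (1 - K * b ^ (-ε)) ≤ W j := (hWb j hjN).1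
    have hWilo : C * a ^ γ / 2 ≤ W (j+1) := by
      have := hWlo (j+1) hiN; rwa [hcast] at this
    set q : ℝ := (1 - 1/a) ^ γ with hqdef
    have hq1 : q ≤ 1 := Real.rpow_le_one h1a (by linarith [div_nonneg (zero_le_one (α := ℝ)) ha0.le]) hγ.le
    have hq0 : 0 ≤ q := Real.rpow_nonneg h1a γ
    have hq2 : 1 - γ' * (1/a) ≤ q := by
      have := one_sub_le_rpow_aux (t := 1/a) (by positivity) (by rw [div_le_one ha0]; linarith) hγ
      rwa [← hγ'def] at this
    have hbγ : b ^ γ = a ^ γ * q := by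
      have hbeq : b = a * (1 - 1/a) := by field_simp; rw [hbdef, hadef]; ring
      rw [hbeq, Real.mul_rpow ha0.le h1a]
    have hba : b ^ (-ε) ≤ 2 * a ^ (-ε) := rpow_neg_double hb0 (by linarith) hε.le hε1.le ha0
    have h7 : 1/a ≤ a ^ (-ε) := by
      have := Real.rpow_le_rpow_of_exponent_le ha1 (by linarith : -(1:ℝ) ≤ -ε)
      rwa [Real.rpow_neg_one, ← one_div] at this
    have hb_nn : (0:ℝ) ≤ b ^ (-ε) := Real.rpow_nonneg hb0.le _
    have he0 : (0:ℝ) < a ^ (-ε) := Real.rpow_pos_of_pos ha0 _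
    have hγpos : (0:ℝ) < a ^ γ := Real.rpow_pos_of_pos ha0 _
    have hγ'0 : (0:ℝ) ≤ γ' := by linarith
    have hweq : w (j+1) = W (j+1) - W j := by rw [hWsucc]; ring
    rw [hbγ] at hWjlo
    have hint1 : 0 ≤ C * a ^ γ * (q - (1 - γ' * a ^ (-ε))) := by
      apply mul_nonneg (by positivity)
      have : γ' * (1/a) ≤ γ' * a ^ (-ε) := mul_le_mul_of_nonneg_left h7 hγ'0
      linarith
    have hint2 : 0 ≤ C * a ^ γ * K * (2 * a ^ (-ε) - q * b ^ (-ε)) := by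
      apply mul_nonneg (by positivity)
      have : q * b ^ (-ε) ≤ 1 * b ^ (-ε) := mul_le_mul_of_nonneg_right hq1 hb_nn
      linarith
    have key : w (j+1) ≤ (3 * K + γ') * a ^ (-ε) * (C * a ^ γ) := by
      linarith [hweq, hWiup, hWjlo, hint1, hint2]
    rw [hcast, div_le_iff₀ (hWpos (j+1) (by omega))]
    have hAe : (0:ℝ) ≤ A * a ^ (-ε) := by positivity
    have hmul : A * a ^ (-ε) * (C * a ^ γ / 2) ≤ A * a ^ (-ε) * W (j+1) :=
      mul_le_mul_of_nonneg_left hWilo hAe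
    rw [hAdef] at hmul ⊢
    linarith [hmul, key]
  have hxhalf : ∀ i : ℕ, N + 1 ≤ i → w i / W i ≤ 1/2 := fun i hi =>
    (hxA i hi).trans (hAhalf i (by omega))
  -- block sums
  have hblock : ∀ n m : ℕ, N + 1 ≤ n → m ≤ 2 * n →
      ∑ i ∈ Finset.Icc n m, w i / W i ≤ M := by
    intro n m hn hm
    have hn1 : 1 ≤ n := by omega
    have hWn : 0 < W n := hWpos n hn1
    have step1 : ∑ i ∈ Finset.Icc n m, w i / W i ≤ (∑ i ∈ Finset.Icc n m, w i) / W n := by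
      rw [Finset.sum_div]
      apply Finset.sum_le_sum
      intro i hi
      have hni : n ≤ i := (Finset.mem_Icc.mp hi).1
      exact div_le_div_of_nonneg_left (hw i) hWn (hWmono hni)
    have step2 : (∑ i ∈ Finset.Icc n m, w i) ≤ W m := by
      rw [hW m]
      apply Finset.sum_le_sum_of_subset_of_nonneg (Finset.Icc_subset_Icc hn1 le_rfl)
      intro i _ _; exact hw i
    have step3 : W m ≤ W (2 * n) := hWmono hm
    have step4 : W (2*n) ≤ 2 * C * ((2*n : ℕ):ℝ) ^ γ := hWup (2*n) (by omega)
    have hn0 : (0:ℝ) < (n:ℝ) := by exact_mod_cast by omega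
    have step5 : ((2*n:ℕ):ℝ) ^ γ = 2 ^ γ * (n:ℝ) ^ γ := by
      have hc : ((2*n:ℕ):ℝ) = 2 * (n:ℝ) := by push_cast; ring
      rw [hc, Real.mul_rpow (by norm_num) hn0.le]
    have hWn_lo : C * (n:ℝ) ^ γ / 2 ≤ W n := hWlo n (by omega)
    have hfinal : W (2*n) / W n ≤ M := by
      rw [div_le_iff₀ hWn, hMdef]
      have hM' : (0:ℝ) ≤ 4 * (2:ℝ) ^ γ := by positivity
      have := mul_le_mul_of_nonneg_left hWn_lo hM'
      rw [step5] at step4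
      linarith
    have hnum : (∑ i ∈ Finset.Icc n m, w i) / W n ≤ W (2*n) / W n := by
      exact (div_le_div_iff_of_pos_right hWn).mpr (step2.trans step3)
    linarith
  -- dyadic bound
  have hdyadic : ∀ d n : ℕ, N + 1 ≤ n →
      ∑ i ∈ Finset.Icc n (n + d), (w i / W i) ^ 2 ≤ D * (n:ℝ) ^ (-ε) := by
    intro d
    induction d using Nat.strong_induction_on with
    | _ d IH =>
      intro n hn
      have hn0 : (0:ℝ) < (n:ℝ) := by exact_mod_cast by omega
      have hne : (0:ℝ) < (n:ℝ) ^ (-ε) := Real.rpow_pos_of_pos hn0 _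
      have hsingle : ∀ m : ℕ, m ≤ 2 * n - 1 →
          ∑ i ∈ Finset.Icc n m, (w i / W i) ^ 2 ≤ A * M * (n:ℝ) ^ (-ε) := by
        intro m hm
        have h1 : ∑ i ∈ Finset.Icc n m, (w i / W i) ^ 2
            ≤ ∑ i ∈ Finset.Icc n m, (A * (n:ℝ) ^ (-ε)) * (w i / W i) := by
          apply Finset.sum_le_sum
          intro i hi
          have hni : n ≤ i := (Finset.mem_Icc.mp hi).1
          have hxi : w i / W i ≤ A * (i:ℝ) ^ (-ε) := hxA i (by omega)
          have hmono : (i:ℝ) ^ (-ε) ≤ (n:ℝ) ^ (-ε) :=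
            rpow_neg_anti hn0 (by exact_mod_cast hni) hε.le
          have hle : w i / W i ≤ A * (n:ℝ) ^ (-ε) :=
            hxi.trans (mul_le_mul_of_nonneg_left hmono hA0.le)
          rw [sq]
          exact mul_le_mul_of_nonneg_right hle (hxnonneg i)
        rw [← Finset.mul_sum] at h1
        have h2 : ∑ i ∈ Finset.Icc n m, w i / W i ≤ M := hblock n m hn (by omega)
        calc ∑ i ∈ Finset.Icc n m, (w i / W i) ^ 2
            ≤ A * (n:ℝ) ^ (-ε) * ∑ i ∈ Finset.Icc n m, (w i / W i) := h1
          _ ≤ A * (n:ℝ) ^ (-ε) * M := mul_le_mul_of_nonneg_left h2 (by positivity)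
          _ = A * M * (n:ℝ) ^ (-ε) := by ring
      rcases lt_or_ge d n with hd | hd
      · have h1 := hsingle (n + d) (by omega)
        have hAMD' : A * M * (n:ℝ) ^ (-ε) ≤ D * (n:ℝ) ^ (-ε) :=
          mul_le_mul_of_nonneg_right hAMD hne.le
        linarith
      · have hsplit : Finset.Icc n (n + d) =
            Finset.Icc n (2 * n - 1) ∪ Finset.Icc (2 * n) (n + d) := by
          ext k; simp only [Finset.mem_Icc, Finset.mem_union]; omega
        have hdisj : Disjoint (Finset.Icc n (2 * n - 1)) (Finset.Icc (2 * n) (n + d)) := by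
          rw [Finset.disjoint_left]
          intro k hk hk'
          simp only [Finset.mem_Icc] at hk hk'
          omega
        rw [hsplit, Finset.sum_union hdisj]
        have h1 := hsingle (2 * n - 1) le_rfl
        have h2 : ∑ i ∈ Finset.Icc (2 * n) (n + d), (w i / W i) ^ 2
            ≤ D * ((2 * n : ℕ):ℝ) ^ (-ε) := by
          have heq : n + d = 2 * n + (d - n) := by omega
          rw [heq]
          exact IH (d - n) (by omega) (2 * n) (by omega)
        have hc2 : ((2 * n : ℕ):ℝ) ^ (-ε) = 2 ^ (-ε) * (n:ℝ) ^ (-ε) := by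
          have hc : ((2*n:ℕ):ℝ) = 2 * (n:ℝ) := by push_cast; ring
          rw [hc, Real.mul_rpow (by norm_num) hn0.le]
        rw [hc2] at h2
        have hkey : A * M * (n:ℝ) ^ (-ε) + D * ((2:ℝ) ^ (-ε) * (n:ℝ) ^ (-ε))
            = D * (n:ℝ) ^ (-ε) := by
          have h12 : (1:ℝ) - (2:ℝ) ^ (-ε) ≠ 0 := by linarith
          rw [hDdef]
          field_simp
          ring
        linarith
  -- partial sums of squares bounded
  have hIco : ∀ n m : ℕ, N + 1 ≤ n →
      ∑ i ∈ Finset.range m, (w (n + i) / W (n + i)) ^ 2 ≤ D * (n:ℝ) ^ (-ε) := by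
    intro n m hn
    have hn0 : (0:ℝ) < (n:ℝ) := by exact_mod_cast by omega
    have hpos : (0:ℝ) ≤ D * (n:ℝ) ^ (-ε) := by positivity
    rcases Nat.eq_zero_or_pos m with rfl | hm
    · simpa using hpos
    · have hidx : n + (m - 1) + 1 - n = m := by omega
      calc ∑ i ∈ Finset.range m, (w (n + i) / W (n + i)) ^ 2
          = ∑ i ∈ Finset.Icc n (n + (m - 1)), (w i / W i) ^ 2 := by
            rw [← Finset.Ico_add_one_right_eq_Icc, Finset.sum_Ico_eq_sum_range, hidx]
        _ ≤ D * (n:ℝ) ^ (-ε) := hdyadic (m - 1) n hn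
  have hsummable : ∀ n : ℕ, N + 1 ≤ n →
      Summable (fun i => (w (n + i) / W (n + i)) ^ 2) := by
    intro n hn
    exact summable_of_sum_range_le (fun i => sq_nonneg _) (fun m => hIco n m hn)
  have htail : ∀ n : ℕ, N + 1 ≤ n →
      ∑' i, (w (n + i) / W (n + i)) ^ 2 ≤ D * (n:ℝ) ^ (-ε) := by
    intro n hn
    exact Real.tsum_le_of_sum_range_le (fun i => sq_nonneg _) (fun m => hIco n m hn)
  -- the remainder terms in the log comparison
  set r : ℕ → ℝ :=
    fun i => Real.log (W (i + 1)) - Real.log (W i) - w (i + 1) / W (i + 1) with hrdef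
  have hr_eq : ∀ i, r i = Real.log (W (i + 1)) - Real.log (W i) - w (i + 1) / W (i + 1) :=
    fun i => rfl
  have hrprop : ∀ i : ℕ, N + 1 ≤ i →
      0 ≤ r i ∧ r i ≤ 2 * (w (i + 1) / W (i + 1)) ^ 2 := by
    intro i hi
    have hi1 : 1 ≤ i := by omega
    have hWi : 0 < W i := hWpos i hi1
    have hWi1 : 0 < W (i + 1) := hWpos (i + 1) (by omega)
    have hx0 : 0 ≤ w (i + 1) / W (i + 1) := hxnonneg (i + 1)
    have hxh : w (i + 1) / W (i + 1) ≤ 1/2 := hxhalf (i + 1) (by omega)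
    have hfrac : 1 - w (i + 1) / W (i + 1) = W i / W (i + 1) := by
      rw [eq_div_iff hWi1.ne', sub_mul, one_mul, div_mul_cancel₀ _ hWi1.ne']
      linarith [hWsucc i]
    have hlogeq : Real.log (1 - w (i + 1) / W (i + 1))
        = Real.log (W i) - Real.log (W (i + 1)) := by
      rw [hfrac, Real.log_div hWi.ne' hWi1.ne']
    have hreq : r i
        = -(w (i + 1) / W (i + 1) + Real.log (1 - w (i + 1) / W (i + 1))) := by
      rw [hr_eq i, hlogeq]; ring
    have habs : |w (i + 1) / W (i + 1) + Real.log (1 - w (i + 1) / W (i + 1))|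
        ≤ 2 * (w (i + 1) / W (i + 1)) ^ 2 := by
      apply log_one_sub_bound
      rw [abs_of_nonneg hx0]; linarith
    constructor
    · have hlb : Real.log (1 - w (i + 1) / W (i + 1)) ≤ -(w (i + 1) / W (i + 1)) := by
        have := Real.log_le_sub_one_of_pos (x := 1 - w (i + 1) / W (i + 1)) (by linarith)
        linarith
      rw [hreq]; linarith
    · rw [hreq]
      exact le_trans (neg_le_abs _) habs
  have hrsummable : ∀ n : ℕ, N + 1 ≤ n → Summable (fun j => r (n + j)) := by
    intro n hn
    have hsum2 : Summable (fun j => 2 * (w (n + 1 + j) / W (n + 1 + j)) ^ 2) :=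
      (hsummable (n + 1) (by omega)).mul_left 2
    apply Summable.of_nonneg_of_le (fun j => (hrprop (n + j) (by omega)).1) _ hsum2
    intro j
    have h := (hrprop (n + j) (by omega)).2
    have hidx : n + j + 1 = n + 1 + j := by omega
    rwa [hidx] at h
  have hrtail_nonneg : ∀ n : ℕ, N + 1 ≤ n → 0 ≤ ∑' j, r (n + j) := fun n hn =>
    tsum_nonneg (fun j => (hrprop (n + j) (by omega)).1)
  have hrtail_le : ∀ n : ℕ, N + 1 ≤ n → ∑' j, r (n + j) ≤ 2 * D * (n:ℝ) ^ (-ε) := by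
    intro n hn
    have hn0 : (0:ℝ) < (n:ℝ) := by exact_mod_cast by omega
    have hsum2 : Summable (fun j => 2 * (w (n + 1 + j) / W (n + 1 + j)) ^ 2) :=
      (hsummable (n + 1) (by omega)).mul_left 2
    have h1 : ∑' j, r (n + j) ≤ ∑' j, 2 * (w (n + 1 + j) / W (n + 1 + j)) ^ 2 := by
      apply Summable.tsum_le_tsum _ (hrsummable n hn) hsum2
      intro j
      have h := (hrprop (n + j) (by omega)).2
      have hidx : n + j + 1 = n + 1 + j := by omega
      rwa [hidx] at h
    have h2 : ∑' j, 2 * (w (n + 1 + j) / W (n + 1 + j)) ^ 2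
        = 2 * ∑' j, (w (n + 1 + j) / W (n + 1 + j)) ^ 2 := tsum_mul_left
    have h3 := htail (n + 1) (by omega)
    have h4 : ((n + 1 : ℕ):ℝ) ^ (-ε) ≤ (n:ℝ) ^ (-ε) := by
      apply rpow_neg_anti hn0 _ hε.le
      push_cast; linarith
    have hle : D * ((n + 1 : ℕ):ℝ) ^ (-ε) ≤ D * (n:ℝ) ^ (-ε) :=
      mul_le_mul_of_nonneg_left h4 hD0.le
    linarith
  -- telescoping identity
  have htel : ∀ n : ℕ, N + 1 ≤ n → ∑ i ∈ Finset.Icc 2 n, w i / W i =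
      (∑ i ∈ Finset.Icc 2 (N + 1), w i / W i)
        + (Real.log (W n) - Real.log (W (N + 1)))
        - ∑ j ∈ Finset.range (n - (N + 1)), r (N + 1 + j) := by
    intro n hn
    induction n, hn using Nat.le_induction with
    | base => simp
    | succ n hn IH =>
      rw [Finset.sum_Icc_succ_top (by omega : 2 ≤ n + 1), IH]
      have hidx : n + 1 - (N + 1) = (n - (N + 1)) + 1 := by omega
      rw [hidx, Finset.sum_range_succ]
      have hidx2 : N + 1 + (n - (N + 1)) = n := by omega
      rw [hidx2, hr_eq n]
      ring
  have htail_r : ∀ n : ℕ, N + 1 ≤ n →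
      ∑ j ∈ Finset.range (n - (N + 1)), r (N + 1 + j) =
        (∑' j, r (N + 1 + j)) - ∑' j, r (n + j) := by
    intro n hn
    have hs : Summable (fun j => r (N + 1 + j)) := hrsummable (N + 1) le_rfl
    have h := Summable.sum_add_tsum_nat_add (f := fun j => r (N + 1 + j)) (n - (N + 1)) hs
    have h2 : ∑' (i : ℕ), r (N + 1 + (i + (n - (N + 1)))) = ∑' j, r (n + j) :=
      tsum_congr (fun i => by congr 1; omega)
    rw [h2] at h
    linarith
  -- the log asymptotics
  have hlog : ∀ n : ℕ, N + 1 ≤ n →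
      |Real.log (W n) - (γ * Real.log n + Real.log C)| ≤ 2 * K * (n:ℝ) ^ (-ε) := by
    intro n hn
    have hn0 : (0:ℝ) < (n:ℝ) := by exact_mod_cast by omega
    have hP : (0:ℝ) < C * (n:ℝ) ^ γ := by positivity
    have habs : |W n / (C * (n:ℝ) ^ γ) - 1| ≤ K * (n:ℝ) ^ (-ε) := by
      have h := (hN₀ n (by
        have : N₀ ≤ N := le_max_left _ _
        omega)).1.1
      rwa [hnorm, Real.norm_eq_abs] at h
    obtain ⟨u, hudef⟩ : ∃ u : ℝ, u = W n / (C * (n:ℝ) ^ γ) - 1 := ⟨_, rfl⟩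
    rw [← hudef] at habs
    have hu2 : |u| ≤ 1/2 := le_trans habs (hKhalf n (by omega))
    obtain ⟨hu2a, hu2b⟩ := abs_le.mp hu2
    have hWn_eq : W n = (C * (n:ℝ) ^ γ) * (1 + u) := by
      rw [hudef]
      field_simp
      ring
    have hlog_eq : Real.log (W n) = Real.log C + γ * Real.log n + Real.log (1 + u) := by
      rw [hWn_eq, Real.log_mul hP.ne' (ne_of_gt (by linarith : (0:ℝ) < 1 + u)),
        Real.log_mul hC.ne' (Real.rpow_pos_of_pos hn0 γ).ne', Real.log_rpow hn0]
    have h1 : |(-u) + Real.log (1 - (-u))| ≤ 2 * (-u) ^ 2 := by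
      apply log_one_sub_bound
      rwa [abs_neg]
    have hsimp : 1 - (-u) = 1 + u := by ring
    rw [hsimp, neg_sq] at h1
    have h2 : |Real.log (1 + u)| ≤ |(-u) + Real.log (1 + u)| + |u| := by
      have : Real.log (1 + u) = ((-u) + Real.log (1 + u)) + u := by ring
      calc |Real.log (1 + u)| = |((-u) + Real.log (1 + u)) + u| := by rw [← this]
        _ ≤ |(-u) + Real.log (1 + u)| + |u| := abs_add_le _ _
    have h3 : u ^ 2 ≤ (1/2) * |u| := by
      have heq : u ^ 2 = |u| * |u| := by rw [← sq_abs]; ring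
      have hprod : 0 ≤ |u| * (1/2 - |u|) :=
        mul_nonneg (abs_nonneg u) (by linarith : (0:ℝ) ≤ 1/2 - |u|)
      nlinarith [hprod]
    have h4 : |Real.log (1 + u)| ≤ 2 * |u| := by linarith
    have h5 : Real.log (W n) - (γ * Real.log n + Real.log C) = Real.log (1 + u) := by
      rw [hlog_eq]; ring
    rw [h5]
    calc |Real.log (1 + u)| ≤ 2 * |u| := h4
      _ ≤ 2 * (K * (n:ℝ) ^ (-ε)) := by linarith
      _ = 2 * K * (n:ℝ) ^ (-ε) := by ring
  -- conclusion
  refine ⟨ε, hε, ?_, ?_⟩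
  · rw [isBigO_iff]
    refine ⟨D, ?_⟩
    filter_upwards [eventually_ge_atTop (N + 1)] with n hn
    rw [hnorm, Real.norm_eq_abs,
      abs_of_nonneg (tsum_nonneg (fun i => sq_nonneg (w (n + i) / W (n + i))))]
    exact htail n hn
  · refine ⟨(∑ i ∈ Finset.Icc 2 (N + 1), w i / W i) - Real.log (W (N + 1)) + Real.log C
      - ∑' j, r (N + 1 + j), ?_⟩
    rw [isBigO_iff]
    refine ⟨2 * K + 2 * D, ?_⟩
    filter_upwards [eventually_ge_atTop (N + 1)] with n hn
    have hE : (∑ i ∈ Finset.Icc 2 n, w i / W i)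
        - (γ * Real.log n + ((∑ i ∈ Finset.Icc 2 (N + 1), w i / W i)
            - Real.log (W (N + 1)) + Real.log C - ∑' j, r (N + 1 + j))) =
        (Real.log (W n) - (γ * Real.log n + Real.log C)) + ∑' j, r (n + j) := by
      rw [htel n hn, htail_r n hn]
      ring
    rw [hnorm, Real.norm_eq_abs, hE]
    have h1 := hlog n hn
    have h2 := hrtail_le n hn
    have h3 := hrtail_nonneg n hn
    have h4 := abs_le.mp h1
    rw [abs_le]
    constructor
    · have : (0:ℝ) ≤ (2 * D) * (n:ℝ) ^ (-ε) := by
        have hn0 : (0:ℝ) < (n:ℝ) := by exact_mod_cast by omega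
        positivity
      nlinarith
    · nlinarith
end

section
/- Let a > −1 and b > 0, and for i ≥ 1 let β_i be a random variable with Beta(1 + a + (b+1)(i−1), b) distribution. Then for every natural number p ≥ 1 and every n ≥ 2, ∏_{i=1}^{n−1} E[β_i^p] = (Γ(1+a+p)/Γ(1+a)) · (Γ(a+(b+1)(n−1)) / Γ(a+(b+1)(n−1)+p)) · (Γ((a+p)/(b+1)+n−1) / Γ(a/(b+1)+n−1)) · (Γ(1+a/(b+1)) / Γ(1+(a+p)/(b+1))). -/
open MeasureTheory Real
open scoped NNReal ENNReal

/-- The Beta(a,b) distribution on ℝ (density `Γ(a+b)/(Γ(a)Γ(b)) u^{a-1}(1-u)^{b-1}` on `[0,1]`),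
with the convention that `Beta(a,0)` is the Dirac mass at `1`. -/
noncomputable def betaMeasure (a b : ℝ) : Measure ℝ :=
  if b = 0 then Measure.dirac 1
  else volume.withDensity fun x =>
    ENNReal.ofReal ((Set.Icc (0:ℝ) 1).indicator
      (fun x => Real.Gamma (a + b) / (Real.Gamma a * Real.Gamma b)
        * x ^ (a - 1) * (1 - x) ^ (b - 1)) x)


lemma real_betaIntegral {s t : ℝ} (hs : 0 < s) (ht : 0 < t) :
    ∫ x in (0:ℝ)..1, x ^ (s - 1) * (1 - x) ^ (t - 1)
      = Real.Gamma s * Real.Gamma t / Real.Gamma (s + t) := by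
  have key := Complex.Gamma_mul_Gamma_eq_betaIntegral (s := s) (t := t)
    (by simpa using hs) (by simpa using ht)
  have hint : Complex.betaIntegral s t
      = ((∫ x in (0:ℝ)..1, x ^ (s - 1) * (1 - x) ^ (t - 1) : ℝ) : ℂ) := by
    rw [Complex.betaIntegral, ← intervalIntegral.integral_ofReal]
    apply intervalIntegral.integral_congr
    intro x hx
    rw [Set.uIcc_of_le (by norm_num : (0:ℝ) ≤ 1)] at hx
    obtain ⟨hx0, hx1⟩ := hx
    simp only [Complex.ofReal_mul]
    rw [Complex.ofReal_cpow hx0, Complex.ofReal_cpow (by linarith : (0:ℝ) ≤ 1 - x)]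
    push_cast
    ring_nf
  rw [hint] at key
  simp only [← Complex.ofReal_add, Complex.Gamma_ofReal] at key
  have h2 : Real.Gamma s * Real.Gamma t
      = Real.Gamma (s + t) * ∫ x in (0:ℝ)..1, x ^ (s - 1) * (1 - x) ^ (t - 1) := by
    exact_mod_cast key
  have hΓ : Real.Gamma (s + t) ≠ 0 := (Real.Gamma_pos_of_pos (by linarith)).ne'
  field_simp
  linarith [h2]

lemma meas_rpow_const (c : ℝ) : Measurable fun x : ℝ => x ^ c := by measurability

lemma betaMeasure_moment {s b : ℝ} (hs : 0 < s) (hb : 0 < b) (p : ℕ) :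
    ∫ u, u ^ p ∂(betaMeasure s b)
      = Real.Gamma (s + p) * Real.Gamma (s + b)
          / (Real.Gamma s * Real.Gamma (s + b + p)) := by
  have hΓs : (0:ℝ) < Real.Gamma s := Real.Gamma_pos_of_pos hs
  have hΓb : (0:ℝ) < Real.Gamma b := Real.Gamma_pos_of_pos hb
  have hΓsb : (0:ℝ) < Real.Gamma (s + b) := Real.Gamma_pos_of_pos (by linarith)
  have hΓsbp : (0:ℝ) < Real.Gamma (s + b + p) :=
    Real.Gamma_pos_of_pos (by positivity)
  have hΓsp : (0:ℝ) < Real.Gamma (s + p) :=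
    Real.Gamma_pos_of_pos (by positivity)
  set c : ℝ := Real.Gamma (s + b) / (Real.Gamma s * Real.Gamma b) with hc
  have hc0 : 0 ≤ c := by positivity
  set h : ℝ → ℝ := (Set.Icc (0:ℝ) 1).indicator
      (fun x => c * x ^ (s - 1) * (1 - x) ^ (b - 1)) with hh
  have h_nonneg : ∀ x, 0 ≤ h x := by
    intro x
    rw [hh]
    apply Set.indicator_nonneg
    intro y hy
    have h1 : (0:ℝ) ≤ y ^ (s-1) := Real.rpow_nonneg hy.1 _
    have h2 : (0:ℝ) ≤ (1-y) ^ (b-1) := Real.rpow_nonneg (by linarith [hy.2]) _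
    positivity
  have h_meas : Measurable h := by
    refine Measurable.indicator ?_ measurableSet_Icc
    exact ((meas_rpow_const (s-1)).const_mul c).mul
      ((meas_rpow_const (b-1)).comp (measurable_const.sub measurable_id))
  have hμ : betaMeasure s b
      = volume.withDensity fun x => (((h x).toNNReal : ℝ≥0) : ℝ≥0∞) := by
    rw [betaMeasure, if_neg hb.ne']
    rfl
  rw [hμ, integral_withDensity_eq_integral_smul h_meas.real_toNNReal]
  have step1 : (∫ u, (h u).toNNReal • u ^ p)
      = ∫ u, (Set.Icc (0:ℝ) 1).indicator
          (fun x => c * x ^ (s - 1) * (1 - x) ^ (b - 1) * x ^ p) u := by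
    congr 1
    funext u
    rw [NNReal.smul_def, smul_eq_mul, Real.coe_toNNReal _ (h_nonneg u), hh]
    by_cases hu : u ∈ Set.Icc (0:ℝ) 1 <;>
      simp [Set.indicator_of_mem, Set.indicator_of_notMem, hu]
  rw [step1, integral_indicator measurableSet_Icc,
    MeasureTheory.integral_Icc_eq_integral_Ioc]
  have step2 : (∫ u in Set.Ioc (0:ℝ) 1,
        c * u ^ (s - 1) * (1 - u) ^ (b - 1) * u ^ p)
      = ∫ u in Set.Ioc (0:ℝ) 1, c * (u ^ (s + p - 1) * (1 - u) ^ (b - 1)) := by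
    apply setIntegral_congr_fun measurableSet_Ioc
    intro u hu
    dsimp only
    have hu0 : 0 < u := hu.1
    have hup : (u:ℝ) ^ p = u ^ (p:ℝ) := (Real.rpow_natCast u p).symm
    rw [hup, show s + (p:ℝ) - 1 = (s - 1) + (p:ℝ) by ring, Real.rpow_add hu0]
    ring
  rw [step2, MeasureTheory.integral_const_mul, ← intervalIntegral.integral_of_le (by norm_num : (0:ℝ) ≤ 1),
    real_betaIntegral (by positivity) hb, hc,
    show s + (p:ℝ) + b = s + b + p by ring]
  field_simp

lemma betaMeasure_ne_zero {s b : ℝ} (hs : 0 < s) (hb : 0 < b) : betaMeasure s b ≠ 0 := by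
  intro h0
  have h := betaMeasure_moment hs hb 0
  rw [h0] at h
  simp only [pow_zero, integral_zero_measure, Nat.cast_zero, add_zero] at h
  rw [div_self (by positivity)] at h
  exact one_ne_zero h.symm

lemma prod_gamma_telescope (a b : ℝ) (ha : -1 < a) (hb : 0 < b) (p : ℕ) :
    ∀ n : ℕ, 2 ≤ n →
    (∏ i ∈ Finset.Icc 1 (n - 1),
        Real.Gamma (1 + a + (b + 1) * ((i:ℝ) - 1) + p)
          * Real.Gamma (1 + a + (b + 1) * ((i:ℝ) - 1) + b)
          / (Real.Gamma (1 + a + (b + 1) * ((i:ℝ) - 1))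
            * Real.Gamma (1 + a + (b + 1) * ((i:ℝ) - 1) + b + p)))
      = Real.Gamma (1 + a + p) / Real.Gamma (1 + a)
        * (Real.Gamma (a + (b + 1) * ((n:ℝ) - 1)) /
            Real.Gamma (a + (b + 1) * ((n:ℝ) - 1) + p))
        * (Real.Gamma ((a + p) / (b + 1) + (n:ℝ) - 1) /
            Real.Gamma (a / (b + 1) + (n:ℝ) - 1))
        * (Real.Gamma (1 + a / (b + 1)) / Real.Gamma (1 + (a + p) / (b + 1))) := by
  have hb1 : (0:ℝ) < b + 1 := by linarith
  have hdiva : -1 < a / (b + 1) := (lt_div_iff₀ hb1).mpr (by nlinarith)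
  have hdivap : -1 < (a + p) / (b + 1) := by
    have : (0:ℝ) ≤ p := Nat.cast_nonneg p
    exact (lt_div_iff₀ hb1).mpr (by nlinarith)
  intro n hn
  induction n, hn using Nat.le_induction with
  | base =>
      norm_num
      rw [show a + (b + 1) = 1 + a + b by ring,
        show (a + p) / (b + 1) + (2:ℝ) - 1 = 1 + (a + p) / (b + 1) by ring,
        show a / (b + 1) + (2:ℝ) - 1 = 1 + a / (b + 1) by ring]
      have h1 : Real.Gamma (1 + (a + p) / (b + 1)) ≠ 0 :=
        (Real.Gamma_pos_of_pos (by linarith)).ne'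
      have h2 : Real.Gamma (1 + a / (b + 1)) ≠ 0 :=
        (Real.Gamma_pos_of_pos (by linarith)).ne'
      have hcancel : Real.Gamma (1 + (a + p) / (b + 1)) / Real.Gamma (1 + a / (b + 1))
          * (Real.Gamma (1 + a / (b + 1)) / Real.Gamma (1 + (a + p) / (b + 1))) = 1 := by
        rw [div_mul_div_comm, mul_comm (Real.Gamma (1 + (a + (p:ℝ)) / (b + 1)))]
        exact div_self (mul_ne_zero h2 h1)
      rw [mul_assoc, hcancel, mul_one, div_mul_div_comm]
  | succ n hn2 ih =>
      have hsplit : Finset.Icc 1 (n + 1 - 1) = insert n (Finset.Icc 1 (n - 1)) := by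
        ext x; simp only [Finset.mem_Icc, Finset.mem_insert]; omega
      rw [hsplit, Finset.prod_insert (by simp only [Finset.mem_Icc]; omega), ih]
      push_cast
      have hm : (2:ℝ) ≤ (n:ℝ) := by exact_mod_cast hn2
      have hp0 : (0:ℝ) ≤ (p:ℝ) := Nat.cast_nonneg p
      have hA : (0:ℝ) < a + (b + 1) * ((n:ℝ) - 1) := by nlinarith
      have hAp : (0:ℝ) < a + (b + 1) * ((n:ℝ) - 1) + p := by linarith
      have hu : (0:ℝ) < (a + p) / (b + 1) + (n:ℝ) - 1 := by linarith
      have hv : (0:ℝ) < a / (b + 1) + (n:ℝ) - 1 := by linarith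
      rw [show 1 + a + (b + 1) * ((n:ℝ) - 1) + (p:ℝ)
            = (a + (b + 1) * ((n:ℝ) - 1) + p) + 1 by ring,
        show 1 + a + (b + 1) * ((n:ℝ) - 1) + b
            = a + (b + 1) * ((n:ℝ) + 1 - 1) by ring,
        show 1 + a + (b + 1) * ((n:ℝ) - 1)
            = (a + (b + 1) * ((n:ℝ) - 1)) + 1 by ring,
        show (a + (p:ℝ)) / (b + 1) + ((n:ℝ) + 1) - 1
            = ((a + p) / (b + 1) + (n:ℝ) - 1) + 1 by ring,
        show a / (b + 1) + ((n:ℝ) + 1) - 1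
            = (a / (b + 1) + (n:ℝ) - 1) + 1 by ring,
        Real.Gamma_add_one hAp.ne', Real.Gamma_add_one hA.ne',
        Real.Gamma_add_one hu.ne', Real.Gamma_add_one hv.ne']
      have hG1 : (0:ℝ) < Real.Gamma (a + (b + 1) * ((n:ℝ) - 1)) := Real.Gamma_pos_of_pos hA
      have hG2 : (0:ℝ) < Real.Gamma (a + (b + 1) * ((n:ℝ) - 1) + p) := Real.Gamma_pos_of_pos hAp
      have hG3 : (0:ℝ) < Real.Gamma ((a + p) / (b + 1) + (n:ℝ) - 1) := Real.Gamma_pos_of_pos hu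
      have hG4 : (0:ℝ) < Real.Gamma (a / (b + 1) + (n:ℝ) - 1) := Real.Gamma_pos_of_pos hv
      have hG5 : (0:ℝ) < Real.Gamma (1 + a) := Real.Gamma_pos_of_pos (by linarith)
      have hG6 : (0:ℝ) < Real.Gamma (1 + a + p) := Real.Gamma_pos_of_pos (by linarith)
      have hG7 : (0:ℝ) < Real.Gamma (a + (b + 1) * ((n:ℝ) + 1 - 1)) :=
        Real.Gamma_pos_of_pos (by nlinarith)
      have hG8 : (0:ℝ) < Real.Gamma (a + (b + 1) * ((n:ℝ) + 1 - 1) + p) :=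
        Real.Gamma_pos_of_pos (by nlinarith)
      have hG9 : (0:ℝ) < Real.Gamma (1 + a / (b + 1)) := Real.Gamma_pos_of_pos (by linarith)
      have hG10 : (0:ℝ) < Real.Gamma (1 + (a + p) / (b + 1)) :=
        Real.Gamma_pos_of_pos (by linarith)
      set G1 := Real.Gamma (a + (b + 1) * ((n:ℝ) - 1)) with hG1d
      set G2 := Real.Gamma (a + (b + 1) * ((n:ℝ) - 1) + p) with hG2d
      set G3 := Real.Gamma ((a + p) / (b + 1) + (n:ℝ) - 1) with hG3d
      set G4 := Real.Gamma (a / (b + 1) + (n:ℝ) - 1) with hG4d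
      set G5 := Real.Gamma (1 + a) with hG5d
      set G6 := Real.Gamma (1 + a + p) with hG6d
      set G7 := Real.Gamma (a + (b + 1) * ((n:ℝ) + 1 - 1)) with hG7d
      set G8 := Real.Gamma (a + (b + 1) * ((n:ℝ) + 1 - 1) + p) with hG8d
      set G9 := Real.Gamma (1 + a / (b + 1)) with hG9d
      set G10 := Real.Gamma (1 + (a + p) / (b + 1)) with hG10d
      have e3 : (a + p) / (b + 1) + (n:ℝ) - 1 = (a + (b + 1) * ((n:ℝ) - 1) + p) / (b + 1) := by
        field_simp; ring
      have e4 : a / (b + 1) + (n:ℝ) - 1 = (a + (b + 1) * ((n:ℝ) - 1)) / (b + 1) := by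
        field_simp; ring
      rw [e3, e4, div_eq_div_iff (by positivity) (by positivity)] at *
      field_simp

theorem product_beta_moments
    {Ω : Type*} [MeasurableSpace Ω] (P : Measure Ω) [IsProbabilityMeasure P]
    (a b : ℝ) (ha : -1 < a) (hb : 0 < b)
    (β : ℕ → Ω → ℝ)
    (hβ : ∀ i, 1 ≤ i →
      Measure.map (β i) P = betaMeasure (1 + a + (b + 1) * ((i:ℝ) - 1)) b)
    (p : ℕ) (hp : 1 ≤ p) (n : ℕ) (hn : 2 ≤ n) :
    (∏ i ∈ Finset.Icc 1 (n - 1), ∫ ω, β i ω ^ p ∂P)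
      = Real.Gamma (1 + a + p) / Real.Gamma (1 + a)
        * (Real.Gamma (a + (b + 1) * ((n:ℝ) - 1)) /
            Real.Gamma (a + (b + 1) * ((n:ℝ) - 1) + p))
        * (Real.Gamma ((a + p) / (b + 1) + (n:ℝ) - 1) /
            Real.Gamma (a / (b + 1) + (n:ℝ) - 1))
        * (Real.Gamma (1 + a / (b + 1)) / Real.Gamma (1 + (a + p) / (b + 1))) := by
  rw [← prod_gamma_telescope a b ha hb p n hn]
  apply Finset.prod_congr rfl
  intro i hi
  have hi1 : 1 ≤ i := (Finset.mem_Icc.mp hi).1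
  have hs : (0:ℝ) < 1 + a + (b + 1) * ((i:ℝ) - 1) := by
    have : (1:ℝ) ≤ (i:ℝ) := by exact_mod_cast hi1
    nlinarith
  have hmap := hβ i hi1
  have hmeas : AEMeasurable (β i) P := by
    by_contra hm
    rw [Measure.map_of_not_aemeasurable hm] at hmap
    exact betaMeasure_ne_zero hs hb hmap.symm
  have hsm : AEStronglyMeasurable (fun u : ℝ => u ^ p) (Measure.map (β i) P) :=
    (continuous_pow p).aestronglyMeasurable
  calc ∫ ω, β i ω ^ p ∂P
      = ∫ u, u ^ p ∂(Measure.map (β i) P) := (integral_map hmeas hsm).symm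
    _ = ∫ u, u ^ p ∂(betaMeasure (1 + a + (b + 1) * ((i:ℝ) - 1)) b) := by rw [hmap]
    _ = _ := betaMeasure_moment hs hb p
end
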